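/- arXiv:2306.01341 — 3 statements merged into one kernel-verified Lean document; each statement's English description precedes it below -/
import Mathlib

section
/- Let G be a finite graph on vertex set V, let k and τ ≥ 1 be positive integers, and let 𝒞(G) be a nonempty set of colourings σ : V → [k]. For σ ∈ 𝒞(G) and a vertex v, let L_σ(v) be the set of colours x ∈ [k] such that the colouring obtained from σ by changing the colour of v to x still belongs to 𝒞(G). Let σ be drawn uniformly at random from 𝒞(G). Let X ⊆ V, and let M ⊆ X be a subset of size m. Suppose that |L_σ(v)| ≥ τ for every σ ∈ 𝒞(G) and every v ∈ M. Then for every map σ₀ : V ∖ M → [k] that occurs as the restriction of some element of 𝒞(G) to V ∖ M, the conditional probability that X has no odd colour in σ, given that the restriction of σ to V ∖ M equals σ₀, is at most √2 · (2m/(e·τ))^{m/2}. -/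
open Finset

/-- The set of colours that occur an odd number of times on `X` under `σ`. -/
def oddColorsOn {V : Type*} {k : ℕ} (X : Finset V) (σ : V → Fin k) : Finset (Fin k) :=
  Finset.univ.filter fun c => Odd ((X.filter fun v => σ v = c).card)

/-- `σ` is a proper colouring of the simple graph `G`. -/
def IsProperColoring {V : Type*} {k : ℕ} (G : SimpleGraph V) (σ : V → Fin k) : Prop :=
  ∀ u v, G.Adj u v → σ u ≠ σ v

/-- An odd colouring of a graph: proper, and every vertex with a neighbour has a colour
occurring an odd number of times on its open neighbourhood. -/
def IsOddColoring {V : Type*} [Fintype V] {k : ℕ} (G : SimpleGraph V) [DecidableRel G.Adj]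
    (σ : V → Fin k) : Prop :=
  IsProperColoring G σ ∧
    ∀ v : V, (G.neighborFinset v).Nonempty → (oddColorsOn (G.neighborFinset v) σ).Nonempty

/-- The odd chromatic number of a graph. -/
noncomputable def oddChromNum {V : Type*} [Fintype V] (G : SimpleGraph V)
    [DecidableRel G.Adj] : ℕ :=
  sInf {k | ∃ σ : V → Fin k, IsOddColoring G σ}

/-- An `h`-odd colouring: proper, and every vertex with a neighbour has at least
`min h (deg v)` colours occurring an odd number of times on its neighbourhood. -/
def IsHOddColoring {V : Type*} [Fintype V] {k : ℕ} (h : ℕ) (G : SimpleGraph V)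
    [DecidableRel G.Adj] (σ : V → Fin k) : Prop :=
  IsProperColoring G σ ∧
    ∀ v : V, (G.neighborFinset v).Nonempty →
      min h (G.degree v) ≤ (oddColorsOn (G.neighborFinset v) σ).card

/-- The `h`-odd chromatic number of a graph. -/
noncomputable def hOddChromNum {V : Type*} [Fintype V] (h : ℕ) (G : SimpleGraph V)
    [DecidableRel G.Adj] : ℕ :=
  sInf {k | ∃ σ : V → Fin k, IsHOddColoring h G σ}

/-- The chromatic number of a graph, as a natural number. -/
noncomputable def chrom {V : Type*} (G : SimpleGraph V) : ℕ := sInf {n | G.Colorable n}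

/-- `Δ(H)`: maximum over vertices of the number of hyperedges containing it. -/
def hypDeg {V : Type*} [Fintype V] [DecidableEq V] (H : Finset (Finset V)) : ℕ :=
  Finset.univ.sup fun v => (H.filter fun e => v ∈ e).card

/-- `ε(H)`: minimum size of a hyperedge. -/
noncomputable def hypMinEdge {V : Type*} (H : Finset (Finset V)) : ℕ :=
  sInf {n | ∃ e ∈ H, e.card = n}

/-- An odd colouring of a graph-hypergraph pair: a proper colouring of `G` such that every
hyperedge has a colour occurring an odd number of times on it. -/
def IsOddColoringPair {V : Type*} {k : ℕ} (G : SimpleGraph V) (H : Finset (Finset V))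
    (σ : V → Fin k) : Prop :=
  IsProperColoring G σ ∧ ∀ e ∈ H, (oddColorsOn e σ).Nonempty

/-- An `h`-odd colouring of a graph-hypergraph pair: a proper colouring of `G` such that every
hyperedge `e` has at least `min h |e|` colours occurring an odd number of times on it. -/
def IsHOddColoringPair {V : Type*} {k : ℕ} (h : ℕ) (G : SimpleGraph V) (H : Finset (Finset V))
    (σ : V → Fin k) : Prop :=
  IsProperColoring G σ ∧ ∀ e ∈ H, min h e.card ≤ (oddColorsOn e σ).card

/-- The maximum degree of the subgraph of `G` induced on `S`. -/
def inducedMaxDegree {V : Type*} [Fintype V] [DecidableEq V] (G : SimpleGraph V)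
    [DecidableRel G.Adj] (S : Finset V) : ℕ :=
  S.sup fun v => (G.neighborFinset v ∩ S).card

section Aux

variable {V : Type*} {k : ℕ}


variable {V : Type*} {k : ℕ}

lemma odd_filter_mem {X : Finset V} {σ : V → Fin k} {c : Fin k} :
    c ∈ oddColorsOn X σ ↔ Odd ((X.filter fun v => σ v = c).card) := by
  simp [oddColorsOn]

lemma oddColorsOn_erase_pair [DecidableEq V] {M : Finset V} {σ : V → Fin k}
    {u w : V} (hu : u ∈ M) (hw : w ∈ M) (huw : u ≠ w) (hσuw : σ u = σ w) :
    oddColorsOn ((M.erase u).erase w) σ = oddColorsOn M σ := by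
  classical
  ext c
  rw [odd_filter_mem, odd_filter_mem]
  have hfe : ((M.erase u).erase w).filter (fun v => σ v = c)
      = ((M.filter fun v => σ v = c).erase u).erase w := by
    ext x
    simp only [mem_filter, mem_erase]
    tauto
  rw [hfe]
  by_cases hc : σ u = c
  · have hwc : σ w = c := by rw [← hσuw]; exact hc
    have hu' : u ∈ M.filter fun v => σ v = c := mem_filter.2 ⟨hu, hc⟩
    have hw' : w ∈ (M.filter fun v => σ v = c).erase u :=
      mem_erase.2 ⟨fun h => huw h.symm, mem_filter.2 ⟨hw, hwc⟩⟩
    rw [card_erase_of_mem hw', card_erase_of_mem hu']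
    have h2 : 1 < (M.filter fun v => σ v = c).card :=
      Finset.one_lt_card.2 ⟨u, hu', w, mem_filter.2 ⟨hw, hwc⟩, fun h => huw h⟩
    rw [Nat.odd_iff, Nat.odd_iff]
    omega
  · have hwc : ¬ (σ w = c) := fun h => hc (hσuw.trans h)
    have e1 : (M.filter fun v => σ v = c).erase u = M.filter fun v => σ v = c :=
      erase_eq_of_notMem (fun h => hc (mem_filter.1 h).2)
    rw [e1]
    have e2 : (M.filter fun v => σ v = c).erase w = M.filter fun v => σ v = c :=
      erase_eq_of_notMem (fun h => hwc (mem_filter.1 h).2)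
    rw [e2]

lemma exists_pairing [DecidableEq V] (σ : V → Fin k) (M : Finset V) :
    ∃ (T : Finset V) (pm : V → V), T ⊆ M ∧ Set.InjOn σ ↑T ∧ T.image σ = oddColorsOn M σ ∧
      ∀ v ∈ M \ T, pm v ∈ M \ T ∧ pm v ≠ v ∧ pm (pm v) = v ∧ σ (pm v) = σ v := by
  classical
  generalize hn : M.card = n
  induction n using Nat.strong_induction_on generalizing M with
  | _ n ih =>
  by_cases hinj : ∀ u ∈ M, ∀ w ∈ M, σ u = σ w → u = w
  · refine ⟨M, id, Finset.Subset.refl M, ?_, ?_, by simp⟩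
    · intro a ha b hb hab
      exact hinj a ha b hb hab
    · ext c
      rw [odd_filter_mem]
      simp only [mem_image]
      constructor
      · rintro ⟨v, hv, rfl⟩
        have hsing : M.filter (fun x => σ x = σ v) = {v} := by
          ext x
          simp only [mem_filter, mem_singleton]
          exact ⟨fun ⟨hx, he⟩ => hinj x hx v hv he, fun h => by subst h; exact ⟨hv, rfl⟩⟩
        rw [hsing]
        simp
      · intro hodd
        by_contra hne
        push_neg at hne
        have hemp : M.filter (fun x => σ x = c) = ∅ := by
          ext x
          simp only [mem_filter, notMem_empty, iff_false, not_and]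
          intro hx he
          exact hne x hx he
        rw [hemp] at hodd
        simp at hodd
  · push_neg at hinj
    obtain ⟨u, hu, w, hw, hσuw, huw⟩ := hinj
    set M' := (M.erase u).erase w with hM'
    have hwu : w ≠ u := fun h => huw h.symm
    have hwM' : w ∈ M.erase u := mem_erase.2 ⟨hwu, hw⟩
    have hupos : 0 < M.card := card_pos.2 ⟨u, hu⟩
    have hcard : M'.card = n - 2 := by
      rw [hM', card_erase_of_mem hwM', card_erase_of_mem hu, hn]
      omega
    have hlt : M'.card < n := by omega
    obtain ⟨T, pm', hTM', hinj', himg', hpm'⟩ := ih M'.card hlt M' rfl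
    have hM'M : M' ⊆ M := (erase_subset _ _).trans (erase_subset _ _)
    have huM' : u ∉ M' := fun h => (mem_erase.1 (mem_of_mem_erase h)).1 rfl
    have hwM'' : w ∉ M' := fun h => (mem_erase.1 h).1 rfl
    set pmf : V → V := fun v => if v = u then w else if v = w then u else pm' v with hpmf
    have epu : pmf u = w := by simp [hpmf]
    have epw : pmf w = u := by simp [hpmf, hwu]
    have epv : ∀ v, v ≠ u → v ≠ w → pmf v = pm' v := by
      intro v h1 h2; simp [hpmf, h1, h2]
    refine ⟨T, pmf, hTM'.trans hM'M, hinj', ?_, ?_⟩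
    · rw [himg']
      exact oddColorsOn_erase_pair hu hw huw hσuw
    · intro v hv
      obtain ⟨hvM, hvT⟩ := mem_sdiff.1 hv
      by_cases hvu : v = u
      · subst hvu
        rw [epu, epw]
        exact ⟨mem_sdiff.2 ⟨hw, fun h => hwM'' (hTM' h)⟩, hwu, rfl, hσuw.symm⟩
      · by_cases hvw : v = w
        · subst hvw
          rw [epw, epu]
          exact ⟨mem_sdiff.2 ⟨hu, fun h => huM' (hTM' h)⟩, huw, rfl, hσuw⟩
        · have hvM'' : v ∈ M' := mem_erase.2 ⟨hvw, mem_erase.2 ⟨hvu, hvM⟩⟩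
          obtain ⟨h1, h2, h3, h4⟩ := hpm' v (mem_sdiff.2 ⟨hvM'', hvT⟩)
          have hp1 : pm' v ∈ M' := (mem_sdiff.1 h1).1
          have hpu : pm' v ≠ u := fun h => huM' (h ▸ hp1)
          have hpw : pm' v ≠ w := fun h => hwM'' (h ▸ hp1)
          rw [epv v hvu hvw, epv _ hpu hpw]
          exact ⟨mem_sdiff.2 ⟨hM'M hp1, (mem_sdiff.1 h1).2⟩, h2, h3, h4⟩


end Aux


lemma resample {V : Type*} [Fintype V] [DecidableEq V] {k : ℕ} (τ : ℕ)
    (Ω : Finset (V → Fin k)) (M : Finset V)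
    (hstab : ∀ σ ∈ Ω, ∀ v ∈ M,
      τ ≤ (Finset.univ.filter fun x : Fin k => Function.update σ v x ∈ Ω).card) :
    ∀ S : Finset V, S ⊆ M → ∀ σ ∈ Ω,
      τ ^ S.card ≤ (Ω.filter fun ρ => ∀ v ∉ S, ρ v = σ v).card := by
  classical
  intro S
  induction S using Finset.cons_induction with
  | empty =>
    intro _ σ hσ
    rw [card_empty, pow_zero]
    exact card_pos.2 ⟨σ, mem_filter.2 ⟨hσ, fun v _ => rfl⟩⟩
  | cons v S hv ih =>
    intro hSM σ hσ
    have hvM : v ∈ M := hSM (mem_cons_self _ _)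
    have hSM' : S ⊆ M := (Finset.subset_cons _).trans hSM
    set Lset := univ.filter (fun x : Fin k => Function.update σ v x ∈ Ω) with hLset
    have hA : ∀ x ∈ Lset, τ ^ S.card ≤
        (Ω.filter fun ρ => ∀ u ∉ S, ρ u = Function.update σ v x u).card :=
      fun x hx => ih hSM' _ (mem_filter.1 hx).2
    have hdisj : ∀ x ∈ Lset, ∀ y ∈ Lset, x ≠ y →
        Disjoint (Ω.filter fun ρ => ∀ u ∉ S, ρ u = Function.update σ v x u)
          (Ω.filter fun ρ => ∀ u ∉ S, ρ u = Function.update σ v y u) := by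
      intro x _ y _ hxy
      rw [Finset.disjoint_left]
      intro ρ h1 h2
      have e1 : ρ v = x := by
        rw [(mem_filter.1 h1).2 v hv]; simp [Function.update_self]
      have e2 : ρ v = y := by
        rw [(mem_filter.1 h2).2 v hv]; simp [Function.update_self]
      exact hxy (e1 ▸ e2)
    have hsub : (Lset.biUnion fun x => Ω.filter fun ρ => ∀ u ∉ S, ρ u = Function.update σ v x u)
        ⊆ Ω.filter fun ρ => ∀ u ∉ cons v S hv, ρ u = σ u := by
      intro ρ hρ
      obtain ⟨x, _, hρx⟩ := mem_biUnion.1 hρ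
      refine mem_filter.2 ⟨(mem_filter.1 hρx).1, fun u hu => ?_⟩
      rw [mem_cons, not_or] at hu
      rw [(mem_filter.1 hρx).2 u hu.2, Function.update_of_ne hu.1]
    calc τ ^ (cons v S hv).card = τ ^ S.card * τ := by rw [card_cons, pow_succ]
      _ ≤ τ ^ S.card * Lset.card := Nat.mul_le_mul_left _ (hstab σ hσ v hvM)
      _ = ∑ _x ∈ Lset, τ ^ S.card := by rw [sum_const, smul_eq_mul, mul_comm]
      _ ≤ ∑ x ∈ Lset, (Ω.filter fun ρ => ∀ u ∉ S, ρ u = Function.update σ v x u).card :=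
          Finset.sum_le_sum hA
      _ = (Lset.biUnion fun x => Ω.filter fun ρ =>
            ∀ u ∉ S, ρ u = Function.update σ v x u).card := (card_biUnion hdisj).symm
      _ ≤ _ := card_le_card hsub


lemma e_lt3 : Real.exp 1 < 3 := by
  have := Real.exp_one_lt_d9
  linarith

lemma bern2 {y : ℝ} (hy : 0 < y) (n : ℕ) : 1 + (n : ℝ) * (1/y) ≤ (1 + 1/y)^n := by
  have h0 : (0:ℝ) ≤ 1/y := by positivity
  exact one_add_mul_le_pow (by linarith : (-2:ℝ) ≤ 1/y) n

lemma H1 (q : ℕ) (hq : 1 ≤ q) : 2 * ((4:ℝ) * q)^q ≤ (4*(q:ℝ)+4)^q := by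
  have hq0 : (0:ℝ) < q := by exact_mod_cast hq
  have hb : (2:ℝ) ≤ (1 + 1/(q:ℝ))^q := by
    have h := bern2 hq0 q
    have h2 : 1 + (q:ℝ) * (1/q) = 2 := by
      rw [mul_one_div, div_self (ne_of_gt hq0)]
      norm_num
    linarith [h2.ge.trans h]
  calc 2 * ((4:ℝ)*q)^q ≤ (1+1/(q:ℝ))^q * ((4:ℝ)*q)^q := by
        have : (0:ℝ) ≤ ((4:ℝ)*q)^q := by positivity
        nlinarith
    _ = ((1+1/(q:ℝ)) * (4*q))^q := (mul_pow _ _ _).symm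
    _ = (4*(q:ℝ)+4)^q := by
        congr 1
        field_simp

lemma H2 (m s : ℕ) (hm : 1 ≤ m) (hs : m ≤ 2*s) :
    Real.exp 1 * ((2:ℝ)*m)^s ≤ 2 * (2*(m:ℝ)+2)^s := by
  have hm0 : (0:ℝ) < m := by exact_mod_cast hm
  have hb : (3:ℝ)/2 ≤ (1 + 1/(m:ℝ))^s := by
    have h := bern2 hm0 s
    have h2 : (1:ℝ)/2 ≤ (s:ℝ) * (1/m) := by
      rw [mul_one_div, le_div_iff₀ hm0]
      have : (m:ℝ) ≤ 2*s := by exact_mod_cast hs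
      linarith
    linarith
  have hpos : (0:ℝ) ≤ ((2:ℝ)*m)^s := by positivity
  have hexp : Real.exp 1 ≤ 3 := le_of_lt e_lt3
  calc Real.exp 1 * ((2:ℝ)*m)^s ≤ 3 * ((2:ℝ)*m)^s := by nlinarith
    _ = 2 * ((3:ℝ)/2) * ((2:ℝ)*m)^s := by norm_num
    _ ≤ 2 * ((1+1/(m:ℝ))^s * ((2:ℝ)*m)^s) := by nlinarith
    _ = 2 * ((1+1/(m:ℝ)) * (2*m))^s := by rw [← mul_pow]
    _ = 2 * (2*(m:ℝ)+2)^s := by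
        congr 2
        field_simp

lemma base0 : ∀ q : ℕ, 1 ≤ q →
    (((2*q).factorial : ℝ)) * (Real.exp 1)^q
      ≤ Real.sqrt 2 * (2^q * (q.factorial : ℝ)) * (4*(q:ℝ))^q := by
  intro q hq
  induction q with
  | zero => omega
  | succ q ihq =>
    have hsqrt : (1.41:ℝ) < Real.sqrt 2 := by
      rw [show (1.41:ℝ) = Real.sqrt (1.41^2) by
        rw [Real.sqrt_sq]; norm_num]
      apply Real.sqrt_lt_sqrt <;> norm_num
    have he : Real.exp 1 < 3 := e_lt3
    have hepos : (0:ℝ) < Real.exp 1 := Real.exp_pos 1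
    rcases Nat.eq_or_lt_of_le hq with h1 | h2
    · -- q + 1 = 1
      have : q = 0 := by omega
      subst this
      norm_num [Nat.factorial]
      nlinarith
    · have hq1 : 1 ≤ q := by omega
      have IH := ihq hq1
      -- expand factorials
      have hfac : (((2*(q+1)).factorial : ℕ) : ℝ)
          = (2*(q:ℝ)+2) * ((2*(q:ℝ)+1) * ((2*q).factorial : ℝ)) := by
        have h2q : 2*(q+1) = (2*q+1)+1 := by ring
        rw [h2q, Nat.factorial_succ, Nat.factorial_succ]
        push_cast
        ring
      have hC : Real.sqrt 2 * (2^(q+1) * ((q+1).factorial : ℝ)) * (4*((q:ℝ)+1))^(q+1)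
          = (Real.sqrt 2 * (2^q * (q.factorial:ℝ)) * (2*((q:ℝ)+1)*(4*(q:ℝ)+4))) * (4*(q:ℝ)+4)^q := by
        rw [Nat.factorial_succ, pow_succ, pow_succ]
        push_cast
        ring
      have hIHpos : (0:ℝ) ≤ Real.sqrt 2 * (2^q * (q.factorial:ℝ)) * (4*(q:ℝ))^q := by
        positivity
      have hmain : (((2*(q+1)).factorial : ℕ):ℝ) * (Real.exp 1)^(q+1)
          ≤ (Real.sqrt 2 * (2^q * (q.factorial:ℝ)) * (4*(q:ℝ))^q) * ((2*(q:ℝ)+2)*(2*(q:ℝ)+1)*Real.exp 1) := by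
        rw [hfac, pow_succ]
        have hstep : (((2*q).factorial:ℝ)) * (Real.exp 1)^q * ((2*(q:ℝ)+2)*(2*(q:ℝ)+1)*Real.exp 1)
            ≤ (Real.sqrt 2 * (2^q * (q.factorial:ℝ)) * (4*(q:ℝ))^q) * ((2*(q:ℝ)+2)*(2*(q:ℝ)+1)*Real.exp 1) := by
          apply mul_le_mul_of_nonneg_right IH
          have : (0:ℝ) ≤ (q:ℝ) := Nat.cast_nonneg q
          positivity
        calc (2*(q:ℝ)+2) * ((2*(q:ℝ)+1) * ((2*q).factorial : ℝ)) * ((Real.exp 1)^q * Real.exp 1)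
            = (((2*q).factorial:ℝ)) * (Real.exp 1)^q * ((2*(q:ℝ)+2)*(2*(q:ℝ)+1)*Real.exp 1) := by ring
          _ ≤ _ := hstep
      have hcoef : (2*(q:ℝ)+2)*(2*(q:ℝ)+1)*Real.exp 1 ≤ 16*((q:ℝ)+1)^2 := by
        have hqnn : (0:ℝ) ≤ (q:ℝ) := Nat.cast_nonneg q
        nlinarith
      have h16 : (Real.sqrt 2 * (2^q * (q.factorial:ℝ)) * (4*(q:ℝ))^q) * ((2*(q:ℝ)+2)*(2*(q:ℝ)+1)*Real.exp 1)
          ≤ (Real.sqrt 2 * (2^q * (q.factorial:ℝ)) * (4*(q:ℝ))^q) * (16*((q:ℝ)+1)^2) := by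
        apply mul_le_mul_of_nonneg_left hcoef hIHpos
      have hH1 := H1 q hq1
      have hfin : (Real.sqrt 2 * (2^q * (q.factorial:ℝ)) * (4*(q:ℝ))^q) * (16*((q:ℝ)+1)^2)
          ≤ (Real.sqrt 2 * (2^q * (q.factorial:ℝ)) * (2*((q:ℝ)+1)*(4*(q:ℝ)+4))) * (4*(q:ℝ)+4)^q := by
        have hD : (0:ℝ) ≤ Real.sqrt 2 * (2^q * (q.factorial:ℝ)) * (2*((q:ℝ)+1) * (4*(q:ℝ)+4)) := by positivity
        calc (Real.sqrt 2 * (2^q * (q.factorial:ℝ)) * (4*(q:ℝ))^q) * (16*((q:ℝ)+1)^2)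
            = (Real.sqrt 2 * (2^q * (q.factorial:ℝ)) * (2*((q:ℝ)+1)*(4*(q:ℝ)+4))) * (2 * ((4*(q:ℝ))^q)) := by ring
          _ ≤ (Real.sqrt 2 * (2^q * (q.factorial:ℝ)) * (2*((q:ℝ)+1)*(4*(q:ℝ)+4))) * ((4*(q:ℝ)+4)^q) :=
              mul_le_mul_of_nonneg_left hH1 hD
      have : (((2*(q+1)).factorial : ℕ):ℝ) * (Real.exp 1)^(q+1)
          ≤ (Real.sqrt 2 * (2^q * (q.factorial:ℝ)) * (2*((q:ℝ)+1)*(4*(q:ℝ)+4))) * (4*(q:ℝ)+4)^q :=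
        le_trans hmain (le_trans h16 hfin)
      push_cast
      rw [hC]
      exact this

lemma analytic (q P : ℕ) (h : 1 ≤ 2*q + P) :
    (((2*q+P).factorial : ℝ)) * (Real.exp 1)^(q+P)
      ≤ Real.sqrt 2 * (2^q * (q.factorial : ℝ)) * (2*((2*q+P : ℕ) : ℝ))^(q+P) := by
  induction P with
  | zero =>
    have hq : 1 ≤ q := by omega
    have hb := base0 q hq
    simp only [Nat.add_zero] at *
    have he : (2*((2*q : ℕ):ℝ)) = 4*(q:ℝ) := by push_cast; ring
    rw [he]
    exact hb
  | succ P ih =>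
    by_cases h0 : 2*q + P = 0
    · have hq0 : q = 0 := by omega
      have hP0 : P = 0 := by omega
      subst hq0; subst hP0
      have hsqrt : (1.41:ℝ) < Real.sqrt 2 := by
        rw [show (1.41:ℝ) = Real.sqrt (1.41^2) by rw [Real.sqrt_sq]; norm_num]
        apply Real.sqrt_lt_sqrt <;> norm_num
      have he : Real.exp 1 < 3 := e_lt3
      have := Real.exp_one_lt_d9
      norm_num [Nat.factorial]
      nlinarith
    · have h1 : 1 ≤ 2*q+P := by omega
      have IH := ih h1
      have hm1 : 2*q+(P+1) = (2*q+P)+1 := by ring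
      have hs1 : q+(P+1) = (q+P)+1 := by ring
      rw [hm1, hs1, Nat.factorial_succ, pow_succ]
      set m := 2*q+P with hmdef
      set s := q+P with hsdef
      have hmcast : ((m+1 : ℕ):ℝ) = (m:ℝ)+1 := by push_cast; ring
      have hDq : (0:ℝ) ≤ Real.sqrt 2 * (2^q * (q.factorial : ℝ)) := by positivity
      have hmm : 1 ≤ m := h1
      have hms : m ≤ 2*s := by omega
      have hH2 := H2 m s hmm hms
      have hmpos : (0:ℝ) ≤ (m:ℝ)+1 := by positivity
      calc ((((m+1 : ℕ)) * m.factorial : ℕ):ℝ) * ((Real.exp 1)^s * Real.exp 1)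
          = ((m:ℝ)+1) * (((m.factorial:ℕ):ℝ) * (Real.exp 1)^s) * Real.exp 1 := by
            push_cast; ring
        _ ≤ ((m:ℝ)+1) * (Real.sqrt 2 * (2^q * (q.factorial : ℝ)) * (2*(m:ℝ))^s) * Real.exp 1 := by
            apply mul_le_mul_of_nonneg_right _ (le_of_lt (Real.exp_pos 1))
            exact mul_le_mul_of_nonneg_left (by exact_mod_cast IH) hmpos
        _ = (((m:ℝ)+1) * (Real.sqrt 2 * (2^q * (q.factorial : ℝ)))) * (Real.exp 1 * (2*(m:ℝ))^s) := by
            ring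
        _ ≤ (((m:ℝ)+1) * (Real.sqrt 2 * (2^q * (q.factorial : ℝ)))) * (2 * (2*(m:ℝ)+2)^s) := by
            apply mul_le_mul_of_nonneg_left hH2
            positivity
        _ = Real.sqrt 2 * (2^q * (q.factorial : ℝ)) * ((2*(m:ℝ)+2) * (2*(m:ℝ)+2)^s) := by ring
        _ = Real.sqrt 2 * (2^q * (q.factorial : ℝ)) * ((2*((m+1:ℕ):ℝ))^s * (2*((m+1:ℕ):ℝ))) := by
            rw [hmcast]; ring


lemma fiber_bound {V : Type*} [Fintype V] [DecidableEq V] {k : ℕ}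
    (ι : V → ℕ) (hι : Function.Injective ι)
    (M : Finset V) (ρ : V → Fin k) (O₀ : Finset (Fin k)) (q P : ℕ)
    (hO : O₀.card = P) (hMcard : M.card = 2 * q + P)
    (T : (V → Fin k) → Finset V) (pm : (V → Fin k) → V → V)
    (F : Finset (V → Fin k))
    (hT : ∀ σ ∈ F, T σ ⊆ M)
    (hinj : ∀ σ ∈ F, Set.InjOn σ ↑(T σ))
    (himg : ∀ σ ∈ F, (T σ).image σ = O₀)
    (hpm : ∀ σ ∈ F, ∀ v ∈ M \ T σ,
      pm σ v ∈ M \ T σ ∧ pm σ v ≠ v ∧ pm σ (pm σ v) = v ∧ σ (pm σ v) = σ v)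
    (hq : ∀ σ ∈ F, ((M \ T σ).filter fun v => ι v < ι (pm σ v)).card = q)
    (hρ : ∀ σ ∈ F, ∀ v, v ∉ T σ ∪ ((M \ T σ).filter fun v => ι v < ι (pm σ v)) → σ v = ρ v) :
    F.card * (2 ^ q * q.factorial) ≤ (2 * q + P).factorial := by
  classical
  set reps : (V → Fin k) → Finset V := fun σ => (M \ T σ).filter fun v => ι v < ι (pm σ v)
    with hrepsdef
  -- basic facts about reps and partners
  have hreps_sub : ∀ σ, reps σ ⊆ M \ T σ := fun σ => filter_subset _ _
  have hreps_lt : ∀ σ, ∀ v ∈ reps σ, ι v < ι (pm σ v) := fun σ v hv => (mem_filter.1 hv).2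
  have hpartner : ∀ σ, σ ∈ F → ∀ v ∈ reps σ,
      pm σ v ∈ M \ T σ ∧ pm σ v ∉ reps σ ∧ σ (pm σ v) = σ v ∧ pm σ v ≠ v := by
    intro σ hσ v hv
    obtain ⟨h1, h2, h3, h4⟩ := hpm σ hσ v (hreps_sub σ hv)
    refine ⟨h1, ?_, h4, h2⟩
    intro hcon
    have := hreps_lt σ _ hcon
    rw [h3] at this
    exact absurd (hreps_lt σ v hv) (by omega)
  have hpm_not_rep_or_T : ∀ σ, σ ∈ F → ∀ v ∈ reps σ,
      pm σ v ∉ T σ ∪ reps σ := by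
    intro σ hσ v hv
    obtain ⟨h1, h2, _, _⟩ := hpartner σ hσ v hv
    rw [mem_union]
    push_neg
    exact ⟨(mem_sdiff.1 h1).2, h2⟩
  -- enumeration of O₀
  set eO : Fin P → Fin k := fun r => ((O₀.equivFinOfCardEq hO).symm r).1 with heOdef
  have heOmem : ∀ r, eO r ∈ O₀ := fun r => ((O₀.equivFinOfCardEq hO).symm r).2
  have heOinj : Function.Injective eO := fun r r' h =>
    (Equiv.injective _) (Subtype.ext h)
  -- the T-part enumeration
  have htex : ∀ σ, σ ∈ F → ∀ r : Fin P, ∃! v, v ∈ T σ ∧ σ v = eO r := by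
    intro σ hσ r
    have hc : eO r ∈ (T σ).image σ := by rw [himg σ hσ]; exact heOmem r
    obtain ⟨v, hv, hveq⟩ := mem_image.1 hc
    refine ⟨v, ⟨hv, hveq⟩, ?_⟩
    rintro y ⟨hy, hyeq⟩
    exact hinj σ hσ (Finset.mem_coe.2 hy) (Finset.mem_coe.2 hv) (by rw [hyeq, hveq])
  set tf : (σ : V → Fin k) → σ ∈ F → Fin P → V :=
    fun σ hσ r => Finset.choose (fun v => σ v = eO r) (T σ) (htex σ hσ r) with htfdef
  have htf_mem : ∀ σ hσ r, tf σ hσ r ∈ T σ :=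
    fun σ hσ r => Finset.choose_mem (fun v => σ v = eO r) (T σ) (htex σ hσ r)
  have htf_val : ∀ (σ : V → Fin k) (hσ : σ ∈ F) (r : Fin P), σ (tf σ hσ r) = eO r :=
    fun σ hσ r => Finset.choose_property (fun v => σ v = eO r) (T σ) (htex σ hσ r)
  have htf_inj : ∀ σ hσ, Function.Injective (tf σ hσ) := by
    intro σ hσ r r' h
    apply heOinj
    rw [← htf_val σ hσ r, ← htf_val σ hσ r', h]
  -- the reps enumeration
  set eR : (σ : V → Fin k) → σ ∈ F → Fin q → V :=
    fun σ hσ j => (((reps σ).equivFinOfCardEq (hq σ hσ)).symm j).1 with heRdef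
  have heR_mem : ∀ σ hσ j, eR σ hσ j ∈ reps σ :=
    fun σ hσ j => (((reps σ).equivFinOfCardEq (hq σ hσ)).symm j).2
  have heR_inj : ∀ σ hσ, Function.Injective (eR σ hσ) := by
    intro σ hσ j j' h
    exact (Equiv.injective _) (Subtype.ext h)
  -- the encoding function
  set g : (σ : V → Fin k) → σ ∈ F → (Fin q → Bool) → Equiv.Perm (Fin q) →
      ((Fin q × Bool) ⊕ Fin P) → V :=
    fun σ hσ b π => Sum.elim
      (fun jc => if jc.2 = b jc.1 then pm σ (eR σ hσ (π jc.1)) else eR σ hσ (π jc.1))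
      (fun r => tf σ hσ r) with hgdef
  have hg_inl : ∀ σ hσ b π j (c : Bool), g σ hσ b π (Sum.inl (j, c)) =
      if c = b j then pm σ (eR σ hσ (π j)) else eR σ hσ (π j) := by
    intro σ hσ b π j c
    rw [hgdef]
    rfl
  have hg_inr : ∀ σ hσ b π r, g σ hσ b π (Sum.inr r) = tf σ hσ r := by
    intro σ hσ b π r
    rw [hgdef]
    rfl
  have hg_mem : ∀ σ hσ b π z, g σ hσ b π z ∈ M := by
    intro σ hσ b π z
    match z with
    | Sum.inl (j, c) =>
      rw [hg_inl σ hσ b π j c]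
      by_cases hc : c = b j
      · rw [if_pos hc]
        exact (mem_sdiff.1 (hpartner σ hσ _ (heR_mem σ hσ (π j))).1).1
      · rw [if_neg hc]
        exact (mem_sdiff.1 (hreps_sub σ (heR_mem σ hσ (π j)))).1
    | Sum.inr r => rw [hg_inr σ hσ b π r]; exact hT σ hσ (htf_mem σ hσ r)
  -- pair values are in M \ T, T values in T
  have hg_inl_MT : ∀ σ hσ b π j (c : Bool), g σ hσ b π (Sum.inl (j, c)) ∈ M \ T σ := by
    intro σ hσ b π j c
    rw [hg_inl σ hσ b π j c]
    by_cases hc : c = b j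
    · rw [if_pos hc]; exact (hpartner σ hσ _ (heR_mem σ hσ (π j))).1
    · rw [if_neg hc]; exact hreps_sub σ (heR_mem σ hσ (π j))
  -- disjointness of pairs for distinct reps
  have hpair_disj : ∀ σ, σ ∈ F → ∀ u ∈ reps σ, ∀ u' ∈ reps σ, u ≠ u' →
      ∀ x, (x = u ∨ x = pm σ u) → (x = u' ∨ x = pm σ u') → False := by
    intro σ hσ u hu u' hu' huu' x hx hx'
    obtain ⟨_, hnr, _, _⟩ := hpartner σ hσ u hu
    obtain ⟨_, hnr', _, _⟩ := hpartner σ hσ u' hu'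
    have hpmu : pm σ (pm σ u) = u := (hpm σ hσ u (hreps_sub σ hu)).2.2.1
    rcases hx with rfl | rfl
    · rcases hx' with rfl | h2
      · exact huu' rfl
      · exact hnr' (h2 ▸ hu)
    · rcases hx' with h2 | h2
      · exact hnr (h2 ▸ hu')
      · apply huu'
        have hpmu' : pm σ (pm σ u') = u' := (hpm σ hσ u' (hreps_sub σ hu')).2.2.1
        rw [← hpmu, h2, hpmu']
  have hg_inj : ∀ σ hσ b π, Function.Injective (g σ hσ b π) := by
    intro σ hσ b π z z' hzz
    clear_value g eR tf eO
    match z, z' with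
    | Sum.inl (j, c), Sum.inl (j', c') =>
      by_cases hjj : j = j'
      · subst hjj
        by_cases hcc : c = c'
        · rw [hcc]
        · exfalso
          rw [hg_inl σ hσ b π j c, hg_inl σ hσ b π j c'] at hzz
          have hne := (hpartner σ hσ _ (heR_mem σ hσ (π j))).2.2.2
          rcases Bool.eq_or_eq_not c (b j) with h1 | h1 <;>
            rcases Bool.eq_or_eq_not c' (b j) with h2 | h2
          · exact hcc (h1.trans h2.symm)
          · rw [if_pos h1, if_neg (by simp [h2]), ] at hzz
            exact hne hzz
          · rw [if_neg (by simp [h1]), if_pos h2] at hzz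
            exact hne hzz.symm
          · exact hcc (h1.trans h2.symm)
      · exfalso
        have hu : eR σ hσ (π j) ∈ reps σ := heR_mem σ hσ (π j)
        have hu' : eR σ hσ (π j') ∈ reps σ := heR_mem σ hσ (π j')
        have hne : eR σ hσ (π j) ≠ eR σ hσ (π j') :=
          fun h => hjj (Equiv.injective π (heR_inj σ hσ h))
        apply hpair_disj σ hσ _ hu _ hu' hne (g σ hσ b π (Sum.inl (j, c)))
        · rw [hg_inl σ hσ b π j c]
          by_cases hcb : c = b j
          · rw [if_pos hcb]; right; rfl
          · rw [if_neg hcb]; left; rfl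
        · rw [hzz, hg_inl σ hσ b π j' c']
          by_cases hcb : c' = b j'
          · rw [if_pos hcb]; right; rfl
          · rw [if_neg hcb]; left; rfl
    | Sum.inl (j, c), Sum.inr r =>
      exfalso
      have h1 := hg_inl_MT σ hσ b π j c
      rw [hzz, hg_inr σ hσ b π r] at h1
      exact (mem_sdiff.1 h1).2 (htf_mem σ hσ r)
    | Sum.inr r, Sum.inl (j, c) =>
      exfalso
      have h1 := hg_inl_MT σ hσ b π j c
      rw [← hzz, hg_inr σ hσ b π r] at h1
      exact (mem_sdiff.1 h1).2 (htf_mem σ hσ r)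
    | Sum.inr r, Sum.inr r' =>
      rw [hg_inr σ hσ b π r, hg_inr σ hσ b π r'] at hzz
      rw [htf_inj σ hσ hzz]
  
  -- surjectivity of g onto M
  have hcardD : Fintype.card ((Fin q × Bool) ⊕ Fin P) = 2 * q + P := by
    simp only [Fintype.card_sum, Fintype.card_prod, Fintype.card_bool, Fintype.card_fin]
    ring
  have hg_surj : ∀ σ hσ b π, ∀ v ∈ M, ∃ z, g σ hσ b π z = v := by
    intro σ hσ b π v hv
    have himg2 : Finset.image (g σ hσ b π) Finset.univ = M := by
      apply Finset.eq_of_subset_of_card_le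
      · intro x hx
        obtain ⟨z, _, rfl⟩ := mem_image.1 hx
        exact hg_mem σ hσ b π z
      · rw [Finset.card_image_of_injective _ (hg_inj σ hσ b π), card_univ, hcardD, hMcard]
    rw [← himg2] at hv
    obtain ⟨z, _, hz⟩ := mem_image.1 hv
    exact ⟨z, hz⟩
  -- value of σ on pair slots
  have hval_pair : ∀ σ hσ b π (j : Fin q) (c : Bool),
      σ (g σ hσ b π (Sum.inl (j, c))) = ρ (pm σ (eR σ hσ (π j))) := by
    intro σ hσ b π j c
    have hu : eR σ hσ (π j) ∈ reps σ := heR_mem σ hσ (π j)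
    obtain ⟨h1, h2, h3, h4⟩ := hpartner σ hσ _ hu
    have hρw : σ (pm σ (eR σ hσ (π j))) = ρ (pm σ (eR σ hσ (π j))) :=
      hρ σ hσ _ (hpm_not_rep_or_T σ hσ _ hu)
    rw [hg_inl σ hσ b π j c]
    by_cases hc : c = b j
    · rw [if_pos hc]
      exact hρw
    · rw [if_neg hc, ← h3]
      exact hρw
  -- larger / smaller element of a pair slot, determined by the values of g alone
  have hbig : ∀ σ hσ b π (j : Fin q),
      (if ι (g σ hσ b π (Sum.inl (j, false))) < ι (g σ hσ b π (Sum.inl (j, true)))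
        then g σ hσ b π (Sum.inl (j, true)) else g σ hσ b π (Sum.inl (j, false)))
        = pm σ (eR σ hσ (π j)) := by
    intro σ hσ b π j
    have hlt := hreps_lt σ _ (heR_mem σ hσ (π j))
    rw [hg_inl σ hσ b π j false, hg_inl σ hσ b π j true]
    cases hbj : b j
    · simp only [hbj]
      norm_num
      intro hcon
      exact absurd hcon (by omega)
    · simp only [hbj]
      norm_num
      intro hcon
      exact absurd hcon (by omega)
  have hsmall : ∀ σ hσ b π (j : Fin q),
      (if ι (g σ hσ b π (Sum.inl (j, false))) < ι (g σ hσ b π (Sum.inl (j, true)))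
        then g σ hσ b π (Sum.inl (j, false)) else g σ hσ b π (Sum.inl (j, true)))
        = eR σ hσ (π j) := by
    intro σ hσ b π j
    have hlt := hreps_lt σ _ (heR_mem σ hσ (π j))
    rw [hg_inl σ hσ b π j false, hg_inl σ hσ b π j true]
    cases hbj : b j
    · simp only [hbj]
      norm_num
      intro hcon
      exact absurd hcon (by omega)
    · simp only [hbj]
      norm_num
      intro hcon
      exact absurd hcon (by omega)
  -- main recovery statement
  have hmain : ∀ σ hσ b π σ' hσ' b' π', (∀ z, g σ hσ b π z = g σ' hσ' b' π' z) →
      σ = σ' ∧ b = b' ∧ π = π' := by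
    intro σ hσ b π σ' hσ' b' π' hg_eq
    have hσeq : σ = σ' := by
      funext v
      by_cases hvM : v ∈ M
      · obtain ⟨z, hz⟩ := hg_surj σ hσ b π v hvM
        rcases z with ⟨j, c⟩ | r
        · have e1 : σ v = ρ (pm σ (eR σ hσ (π j))) := by
            rw [← hz]; exact hval_pair σ hσ b π j c
          have hz' : g σ' hσ' b' π' (Sum.inl (j, c)) = v := by rw [← hg_eq]; exact hz
          have e2 : σ' v = ρ (pm σ' (eR σ' hσ' (π' j))) := by
            rw [← hz']; exact hval_pair σ' hσ' b' π' j c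
          have h1 := hbig σ hσ b π j
          have h2 := hbig σ' hσ' b' π' j
          rw [hg_eq (Sum.inl (j, false)), hg_eq (Sum.inl (j, true))] at h1
          rw [e1, e2, ← h2, ← h1]
        · have e1 : σ v = eO r := by
            rw [← hz, hg_inr σ hσ b π r]; exact htf_val σ hσ r
          have hz' : g σ' hσ' b' π' (Sum.inr r) = v := by rw [← hg_eq]; exact hz
          have e2 : σ' v = eO r := by
            rw [← hz', hg_inr σ' hσ' b' π' r]; exact htf_val σ' hσ' r
          rw [e1, e2]
      · have hnv : v ∉ T σ ∪ reps σ := by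
          rw [mem_union]
          rintro (h | h)
          · exact hvM (hT σ hσ h)
          · exact hvM (mem_sdiff.1 (hreps_sub σ h)).1
        have hnv' : v ∉ T σ' ∪ reps σ' := by
          rw [mem_union]
          rintro (h | h)
          · exact hvM (hT σ' hσ' h)
          · exact hvM (mem_sdiff.1 (hreps_sub σ' h)).1
        rw [hρ σ hσ v hnv, hρ σ' hσ' v hnv']
    subst hσeq
    have hπeq : π = π' := by
      apply Equiv.ext
      intro j
      have h1 := hsmall σ hσ b π j
      have h2 := hsmall σ hσ' b' π' j
      rw [hg_eq (Sum.inl (j, false)), hg_eq (Sum.inl (j, true))] at h1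
      have h3 : eR σ hσ (π j) = eR σ hσ' (π' j) := by rw [← h1, h2]
      exact heR_inj σ hσ h3
    subst hπeq
    have hbeq : b = b' := by
      funext j
      by_cases hbb : b j = b' j
      · exact hbb
      · exfalso
        have h1 : g σ hσ b π (Sum.inl (j, b j)) = pm σ (eR σ hσ (π j)) := by
          rw [hg_inl σ hσ b π j (b j), if_pos rfl]
        have h2 : g σ hσ' b' π (Sum.inl (j, b j)) = eR σ hσ' (π j) := by
          rw [hg_inl σ hσ' b' π j (b j), if_neg hbb]
        have h3 := hg_eq (Sum.inl (j, b j))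
        rw [h1, h2] at h3
        exact (hpartner σ hσ _ (heR_mem σ hσ (π j))).2.2.2 h3
    exact ⟨rfl, hbeq, rfl⟩
  -- the injection and the counting
  let Θ : ({x // x ∈ F} × ((Fin q → Bool) × Equiv.Perm (Fin q))) →
      (((Fin q × Bool) ⊕ Fin P) ↪ {x // x ∈ M}) :=
    fun t => ⟨fun z => ⟨g t.1.1 t.1.2 t.2.1 t.2.2 z, hg_mem t.1.1 t.1.2 t.2.1 t.2.2 z⟩,
      fun z z' hzz => hg_inj t.1.1 t.1.2 t.2.1 t.2.2 (congrArg Subtype.val hzz)⟩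
  have hΘinj : Function.Injective Θ := by
    rintro ⟨⟨σ, hσ⟩, b, π⟩ ⟨⟨σ', hσ'⟩, b', π'⟩ hΘeq
    have hg_eq : ∀ z, g σ hσ b π z = g σ' hσ' b' π' z := by
      intro z
      exact congrArg Subtype.val (DFunLike.congr_fun hΘeq z)
    obtain ⟨h1, h2, h3⟩ := hmain σ hσ b π σ' hσ' b' π' hg_eq
    subst h1; subst h2; subst h3
    rfl
  have hcard := Fintype.card_le_of_injective Θ hΘinj
  rw [Fintype.card_prod, Fintype.card_prod, Fintype.card_coe, Fintype.card_perm,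
    Fintype.card_embedding_eq, hcardD, Fintype.card_coe, hMcard, Nat.descFactorial_self] at hcard
  have hfb : Fintype.card (Fin q → Bool) = 2 ^ q := by simp
  rw [hfb, Fintype.card_fin] at hcard
  exact hcard

theorem stmt6 {V : Type*} [Fintype V] [DecidableEq V] (G : SimpleGraph V)
    (k τ : ℕ) (hk : 0 < k) (hτ : 1 ≤ τ)
    (𝒞 : Finset (V → Fin k)) (h𝒞 : 𝒞.Nonempty)
    (X M : Finset V) (hMX : M ⊆ X) (m : ℕ) (hm : M.card = m)
    (hL : ∀ σ ∈ 𝒞, ∀ v ∈ M,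
      τ ≤ (Finset.univ.filter fun x : Fin k => Function.update σ v x ∈ 𝒞).card)
    (σ₀ : V → Fin k) (hσ₀ : ∃ σ ∈ 𝒞, ∀ v ∉ M, σ v = σ₀ v) :
    ((𝒞.filter fun σ => (∀ v ∉ M, σ v = σ₀ v) ∧ oddColorsOn X σ = ∅).card : ℝ) /
        ((𝒞.filter fun σ => ∀ v ∉ M, σ v = σ₀ v).card : ℝ) ≤
      Real.sqrt 2 * (2 * (m : ℝ) / (Real.exp 1 * (τ : ℝ))) ^ ((m : ℝ) / 2) := by
  classical
  set B := 𝒞.filter (fun σ => (∀ v ∉ M, σ v = σ₀ v) ∧ oddColorsOn X σ = ∅) with hB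
  set Ω := 𝒞.filter (fun σ => ∀ v ∉ M, σ v = σ₀ v) with hΩ
  set R : ℝ := Real.sqrt 2 * (2 * (m : ℝ) / (Real.exp 1 * (τ : ℝ))) ^ ((m : ℝ) / 2) with hR
  have hBsubΩ : B ⊆ Ω := by
    rw [hB, hΩ]
    intro σ hσ
    rw [mem_filter] at *
    exact ⟨hσ.1, hσ.2.1⟩
  obtain ⟨σ₁, hσ₁C, hσ₁agree⟩ := hσ₀
  have hσ₁Ω : σ₁ ∈ Ω := by rw [hΩ]; exact mem_filter.2 ⟨hσ₁C, hσ₁agree⟩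
  have hΩpos : 0 < Ω.card := card_pos.2 ⟨σ₁, hσ₁Ω⟩
  have hΩposR : (0:ℝ) < (Ω.card : ℝ) := by exact_mod_cast hΩpos
  have hτ1R : (1:ℝ) ≤ (τ:ℝ) := by exact_mod_cast hτ
  have hτR : (0:ℝ) < (τ:ℝ) := by linarith
  have hepos : (0:ℝ) < Real.exp 1 := Real.exp_pos 1
  have hRnn : (0:ℝ) ≤ R := by
    rw [hR]
    have h1 : (0:ℝ) ≤ 2 * (m:ℝ) / (Real.exp 1 * τ) := by positivity
    have h2 : (0:ℝ) ≤ (2 * (m:ℝ) / (Real.exp 1 * τ)) ^ ((m:ℝ)/2) := Real.rpow_nonneg h1 _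
    positivity
  by_cases hBzero : B.card = 0
  · rw [hBzero]
    simpa using hRnn
  by_cases hR1 : 1 ≤ R
  · have h1 : (B.card : ℝ) ≤ (Ω.card : ℝ) := by exact_mod_cast card_le_card hBsubΩ
    have h2 : (B.card : ℝ) / (Ω.card : ℝ) ≤ 1 := by
      rw [div_le_one hΩposR]
      exact h1
    linarith
  push_neg at hR1
  have hsqrt1 : (1:ℝ) ≤ Real.sqrt 2 := by
    rw [show (1:ℝ) = Real.sqrt 1 by simp]
    exact Real.sqrt_le_sqrt (by norm_num)
  have hm1 : 1 ≤ m := by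
    by_contra hm0
    have hmz : m = 0 := by omega
    rw [hmz] at hR
    simp [Real.rpow_zero] at hR
    linarith
  set x := 2 * (m:ℝ) / (Real.exp 1 * τ) with hx
  have hmR : (0:ℝ) < (m:ℝ) := by exact_mod_cast hm1
  have hx0 : 0 < x := by rw [hx]; positivity
  have hx1 : x < 1 := by
    by_contra hxc
    push_neg at hxc
    have h1 : (1:ℝ) ≤ x ^ ((m:ℝ)/2) := by
      have := Real.rpow_le_rpow_of_exponent_le hxc (show (0:ℝ) ≤ (m:ℝ)/2 by positivity)
      rwa [Real.rpow_zero] at this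
    have : (1:ℝ) ≤ R := by
      rw [hR]
      nlinarith
    linarith
  -- linear order surrogate on V
  set ι : V → ℕ := fun v => ((Fintype.equivFin V) v : ℕ) with hιdef
  have hιinj : Function.Injective ι := by
    intro a b h
    exact (Fintype.equivFin V).injective (Fin.val_injective h)
  -- pairing data via choice
  have hpairall : ∀ σ : V → Fin k, ∃ TP : Finset V × (V → V), TP.1 ⊆ M ∧
      Set.InjOn σ ↑TP.1 ∧ TP.1.image σ = oddColorsOn M σ ∧
      ∀ v ∈ M \ TP.1, TP.2 v ∈ M \ TP.1 ∧ TP.2 v ≠ v ∧ TP.2 (TP.2 v) = v ∧ σ (TP.2 v) = σ v := by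
    intro σ
    obtain ⟨T, pm, h1, h2, h3, h4⟩ := exists_pairing σ M
    exact ⟨(T, pm), h1, h2, h3, h4⟩
  set Tf : (V → Fin k) → Finset V := fun σ => (hpairall σ).choose.1 with hTf
  set pmf : (V → Fin k) → V → V := fun σ => (hpairall σ).choose.2 with hpmf
  have hTspec : ∀ σ : V → Fin k, Tf σ ⊆ M ∧ Set.InjOn σ ↑(Tf σ) ∧
      (Tf σ).image σ = oddColorsOn M σ ∧
      ∀ v ∈ M \ Tf σ, pmf σ v ∈ M \ Tf σ ∧ pmf σ v ≠ v ∧ pmf σ (pmf σ v) = v ∧ σ (pmf σ v) = σ v :=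
    fun σ => (hpairall σ).choose_spec
  set O₀ : Finset (Fin k) := oddColorsOn (X \ M) σ₀ with hO₀
  set P : ℕ := O₀.card with hP
  -- colours odd on M are the same for every σ ∈ B
  have hOddB : ∀ σ ∈ B, oddColorsOn M σ = O₀ := by
    intro σ hσB
    rw [hB, mem_filter] at hσB
    have hagree : ∀ v ∉ M, σ v = σ₀ v := hσB.2.1
    have hodd : oddColorsOn X σ = ∅ := hσB.2.2
    ext c
    rw [odd_filter_mem, hO₀, odd_filter_mem]
    have hXsplit : X.filter (fun v => σ v = c)
        = (M.filter fun v => σ v = c) ∪ ((X \ M).filter fun v => σ v = c) := by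
      rw [← filter_union, union_sdiff_of_subset hMX]
    have hdisj2 : Disjoint (M.filter fun v => σ v = c) ((X \ M).filter fun v => σ v = c) := by
      apply disjoint_filter_filter
      exact disjoint_sdiff
    have hcards : (X.filter fun v => σ v = c).card
        = (M.filter fun v => σ v = c).card + ((X \ M).filter fun v => σ v = c).card := by
      rw [hXsplit, card_union_of_disjoint hdisj2]
    have hfe : (X \ M).filter (fun v => σ v = c) = (X \ M).filter (fun v => σ₀ v = c) := by
      apply filter_congr
      intro v hv
      simp [hagree v (mem_sdiff.1 hv).2]
    have hev : ¬ Odd ((X.filter fun v => σ v = c).card) := by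
      intro hcon
      have hmem : c ∈ oddColorsOn X σ := odd_filter_mem.2 hcon
      rw [hodd] at hmem
      exact notMem_empty c hmem
    rw [← hfe]
    rw [hcards] at hev
    rw [Nat.odd_iff, Nat.odd_iff]
    rw [Nat.odd_iff] at hev
    omega
  set repsf : (V → Fin k) → Finset V := fun σ => (M \ Tf σ).filter fun v => ι v < ι (pmf σ v)
    with hrepsf
  have hTcard : ∀ σ ∈ B, (Tf σ).card = P := by
    intro σ hσB
    have h1 : (Tf σ).image σ = O₀ := by rw [(hTspec σ).2.2.1, hOddB σ hσB]
    rw [hP, ← h1, card_image_of_injOn (hTspec σ).2.1]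
  have hMTdecomp : ∀ σ ∈ B, (M \ Tf σ).card = 2 * (repsf σ).card := by
    intro σ hσB
    have hsplit : M \ Tf σ = repsf σ ∪ (repsf σ).image (pmf σ) := by
      ext v
      simp only [mem_union, mem_image]
      constructor
      · intro hv
        obtain ⟨h1, h2, h3, h4⟩ := (hTspec σ).2.2.2 v hv
        rcases lt_trichotomy (ι v) (ι (pmf σ v)) with hlt | heq | hgt
        · left
          exact mem_filter.2 ⟨hv, hlt⟩
        · exact absurd (hιinj heq).symm h2
        · right
          refine ⟨pmf σ v, mem_filter.2 ⟨h1, ?_⟩, h3⟩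
          rw [h3]
          exact hgt
      · rintro (hv | ⟨u, hu, rfl⟩)
        · exact (mem_filter.1 hv).1
        · exact ((hTspec σ).2.2.2 u (mem_filter.1 hu).1).1
    have hdisj : Disjoint (repsf σ) ((repsf σ).image (pmf σ)) := by
      rw [Finset.disjoint_left]
      rintro a ha himg
      obtain ⟨u, hu, hua⟩ := mem_image.1 himg
      have hinv : pmf σ (pmf σ u) = u := ((hTspec σ).2.2.2 u (mem_filter.1 hu).1).2.2.1
      have hlta : ι a < ι (pmf σ a) := (mem_filter.1 ha).2
      have hltu : ι u < ι (pmf σ u) := (mem_filter.1 hu).2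
      rw [← hua, hinv] at hlta
      omega
    have hinjon : Set.InjOn (pmf σ) ↑(repsf σ) := by
      intro a ha b hb hab
      have hinva : pmf σ (pmf σ a) = a :=
        ((hTspec σ).2.2.2 a (mem_filter.1 (Finset.mem_coe.1 ha)).1).2.2.1
      have hinvb : pmf σ (pmf σ b) = b :=
        ((hTspec σ).2.2.2 b (mem_filter.1 (Finset.mem_coe.1 hb)).1).2.2.1
      rw [← hinva, hab, hinvb]
    rw [hsplit, card_union_of_disjoint hdisj, card_image_of_injOn hinjon]
    ring
  obtain ⟨σs, hσs⟩ := Finset.card_pos.1 (Nat.pos_of_ne_zero hBzero)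
  set q : ℕ := (repsf σs).card with hqdef
  have hm2 : m = 2 * q + P := by
    have h1 : (M \ Tf σs).card + (Tf σs).card = M.card := card_sdiff_add_card_eq_card (hTspec σs).1
    rw [hMTdecomp σs hσs, hTcard σs hσs, hm] at h1
    omega
  have hqB : ∀ σ ∈ B, (repsf σ).card = q := by
    intro σ hσB
    have h1 : (M \ Tf σ).card + (Tf σ).card = M.card := card_sdiff_add_card_eq_card (hTspec σ).1
    rw [hMTdecomp σ hσB, hTcard σ hσB, hm] at h1
    omega
  set Sf : (V → Fin k) → Finset V := fun σ => Tf σ ∪ repsf σ with hSf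
  have hSsub : ∀ σ ∈ B, Sf σ ⊆ M := by
    intro σ hσB
    apply union_subset (hTspec σ).1
    exact (filter_subset _ _).trans sdiff_subset
  have hScard : ∀ σ ∈ B, (Sf σ).card = q + P := by
    intro σ hσB
    have hdisj : Disjoint (Tf σ) (repsf σ) := by
      rw [Finset.disjoint_right]
      intro a ha
      exact (mem_sdiff.1 ((filter_subset _ _) ha)).2
    rw [hSf]
    rw [card_union_of_disjoint hdisj, hTcard σ hσB, hqB σ hσB]
    ring
  have hstab : ∀ σ ∈ Ω, ∀ v ∈ M,
      τ ≤ (Finset.univ.filter fun y : Fin k => Function.update σ v y ∈ Ω).card := by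
    intro σ hσΩ v hv
    have heq : (Finset.univ.filter fun y : Fin k => Function.update σ v y ∈ Ω)
        = (Finset.univ.filter fun y : Fin k => Function.update σ v y ∈ 𝒞) := by
      apply filter_congr
      intro y _
      rw [hΩ]
      simp only [mem_filter]
      constructor
      · exact fun h => h.1
      · intro h
        refine ⟨h, fun u hu => ?_⟩
        rw [Function.update_of_ne (fun hc : u = v => hu (hc ▸ hv))]
        exact (mem_filter.1 hσΩ).2 u hu
    rw [heq]
    exact hL σ (mem_filter.1 hσΩ).1 v hv
  have hkey1 : ∀ σ ∈ B, τ ^ (q + P) ≤ (Ω.filter fun ρ' => ∀ v ∉ Sf σ, ρ' v = σ v).card := by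
    intro σ hσB
    have h1 := resample τ Ω M hstab (Sf σ) (hSsub σ hσB) σ (hBsubΩ hσB)
    rwa [hScard σ hσB] at h1
  have hswap : ∑ σ ∈ B, (Ω.filter fun ρ' => ∀ v ∉ Sf σ, ρ' v = σ v).card
      = ∑ ρ' ∈ Ω, (B.filter fun σ => ∀ v ∉ Sf σ, ρ' v = σ v).card := by
    simp only [Finset.card_filter]
    exact Finset.sum_comm
  have hkey2 : ∀ ρ' ∈ Ω, (B.filter fun σ => ∀ v ∉ Sf σ, ρ' v = σ v).card
      * (2 ^ q * q.factorial) ≤ (2 * q + P).factorial := by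
    intro ρ' _
    apply fiber_bound ι hιinj M ρ' O₀ q P hP.symm (by rw [hm]; exact hm2) Tf pmf
      (B.filter fun σ => ∀ v ∉ Sf σ, ρ' v = σ v)
    · intro σ hσF
      exact (hTspec σ).1
    · intro σ hσF
      exact (hTspec σ).2.1
    · intro σ hσF
      rw [(hTspec σ).2.2.1, hOddB σ (mem_filter.1 hσF).1]
    · intro σ hσF
      exact (hTspec σ).2.2.2
    · intro σ hσF
      exact hqB σ (mem_filter.1 hσF).1
    · intro σ hσF v hv
      exact ((mem_filter.1 hσF).2 v hv).symm
  have hKEY : B.card * τ ^ (q + P) * (2 ^ q * q.factorial) ≤ Ω.card * (2 * q + P).factorial := by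
    calc B.card * τ ^ (q + P) * (2 ^ q * q.factorial)
        = (∑ _σ ∈ B, τ ^ (q + P)) * (2 ^ q * q.factorial) := by
          rw [sum_const, smul_eq_mul]
      _ ≤ (∑ σ ∈ B, (Ω.filter fun ρ' => ∀ v ∉ Sf σ, ρ' v = σ v).card) * (2 ^ q * q.factorial) :=
          Nat.mul_le_mul_right _ (Finset.sum_le_sum hkey1)
      _ = (∑ ρ' ∈ Ω, (B.filter fun σ => ∀ v ∉ Sf σ, ρ' v = σ v).card) * (2 ^ q * q.factorial) := by
          rw [hswap]
      _ = ∑ ρ' ∈ Ω, (B.filter fun σ => ∀ v ∉ Sf σ, ρ' v = σ v).card * (2 ^ q * q.factorial) := by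
          rw [Finset.sum_mul]
      _ ≤ ∑ _ρ' ∈ Ω, (2 * q + P).factorial := Finset.sum_le_sum hkey2
      _ = Ω.card * (2 * q + P).factorial := by rw [sum_const, smul_eq_mul]
  -- pass to the reals
  have h2qP : 1 ≤ 2*q + P := by rw [← hm2]; exact hm1
  have hean := analytic q P h2qP
  have hmcast : ((2*q+P : ℕ) : ℝ) = (m:ℝ) := by exact_mod_cast hm2.symm
  have hxτ : x * (τ:ℝ) = 2*(m:ℝ)/Real.exp 1 := by
    rw [hx]
    field_simp
  have hpow : x^(q+P) * (τ:ℝ)^(q+P) = (2*((2*q+P:ℕ):ℝ))^(q+P) / (Real.exp 1)^(q+P) := by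
    rw [← mul_pow, hxτ, div_pow, hmcast]
  have hstep1 : (((2*q+P).factorial : ℕ) : ℝ)
      ≤ Real.sqrt 2 * ((2:ℝ)^q * (q.factorial : ℕ)) * (x^(q+P) * (τ:ℝ)^(q+P)) := by
    rw [hpow, ← mul_div_assoc]
    rw [le_div_iff₀ (by positivity)]
    calc (((2*q+P).factorial : ℕ) : ℝ) * (Real.exp 1)^(q+P)
        ≤ Real.sqrt 2 * (2^q * ((q.factorial : ℕ):ℝ)) * (2*((2*q+P : ℕ):ℝ))^(q+P) := hean
      _ = Real.sqrt 2 * ((2:ℝ)^q * (q.factorial : ℕ)) * (2*((2*q+P:ℕ):ℝ))^(q+P) := by ring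
  have hDpos : (0:ℝ) < (τ:ℝ)^(q+P) * ((2:ℝ)^q * ((q.factorial : ℕ):ℝ)) := by
    have : (0:ℝ) < ((q.factorial : ℕ):ℝ) := by exact_mod_cast q.factorial_pos
    positivity
  have hmainR : ((B.card:ℝ) * (τ:ℝ)^(q+P)) * ((2:ℝ)^q * ((q.factorial : ℕ):ℝ))
      ≤ (Ω.card:ℝ) * (((2*q+P).factorial : ℕ):ℝ) := by
    exact_mod_cast hKEY
  have h1 : (B.card:ℝ) ≤ (Ω.card:ℝ) *
      ((((2*q+P).factorial : ℕ):ℝ) / ((τ:ℝ)^(q+P) * ((2:ℝ)^q * ((q.factorial : ℕ):ℝ)))) := by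
    rw [mul_div_assoc']
    rw [le_div_iff₀ hDpos]
    calc (B.card:ℝ) * ((τ:ℝ)^(q+P) * ((2:ℝ)^q * ((q.factorial : ℕ):ℝ)))
        = ((B.card:ℝ) * (τ:ℝ)^(q+P)) * ((2:ℝ)^q * ((q.factorial : ℕ):ℝ)) := by ring
      _ ≤ (Ω.card:ℝ) * (((2*q+P).factorial : ℕ):ℝ) := hmainR
  have h2 : (((2*q+P).factorial : ℕ):ℝ) / ((τ:ℝ)^(q+P) * ((2:ℝ)^q * ((q.factorial : ℕ):ℝ)))
      ≤ Real.sqrt 2 * x^(q+P) := by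
    rw [div_le_iff₀ hDpos]
    calc (((2*q+P).factorial : ℕ):ℝ)
        ≤ Real.sqrt 2 * ((2:ℝ)^q * (q.factorial : ℕ)) * (x^(q+P) * (τ:ℝ)^(q+P)) := hstep1
      _ = Real.sqrt 2 * x^(q+P) * ((τ:ℝ)^(q+P) * ((2:ℝ)^q * ((q.factorial : ℕ):ℝ))) := by ring
  have h3 : Real.sqrt 2 * x^(q+P) ≤ R := by
    rw [hR]
    apply mul_le_mul_of_nonneg_left _ (Real.sqrt_nonneg 2)
    rw [← Real.rpow_natCast x (q+P)]
    apply Real.rpow_le_rpow_of_exponent_ge hx0 (le_of_lt hx1)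
    rw [hm2]
    push_cast
    linarith
  rw [div_le_iff₀ hΩposR]
  calc (B.card:ℝ)
      ≤ (Ω.card:ℝ) * ((((2*q+P).factorial : ℕ):ℝ)
          / ((τ:ℝ)^(q+P) * ((2:ℝ)^q * ((q.factorial : ℕ):ℝ)))) := h1
    _ ≤ (Ω.card:ℝ) * (Real.sqrt 2 * x^(q+P)) := by
        apply mul_le_mul_of_nonneg_left h2 (le_of_lt hΩposR)
    _ ≤ (Ω.card:ℝ) * R := mul_le_mul_of_nonneg_left h3 (le_of_lt hΩposR)
    _ = R * (Ω.card:ℝ) := mul_comm _ _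
end

section
/- For every integer k₀ ≥ 2 and every real number N, there exists a finite simple graph G with chromatic number χ(G) = k₀, maximum degree Δ(G) ≥ N, minimum degree δ(G) ≥ log₄ Δ(G), and odd chromatic number χ_o(G) > χ(G) · log₄ Δ(G), where log₄ denotes the logarithm to base 4. -/
open Finset

attribute [local instance] Classical.propDecidable

open Finset

attribute [local instance] Classical.propDecidable

abbrev PadV (k₀ t : ℕ) := (Fin k₀ × Fin (2*t)) ⊕ (Fin k₀ × {S : Finset (Fin (2*t)) // t ≤ S.card})

def padAdj (k₀ t : ℕ) : PadV k₀ t → PadV k₀ t → Prop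
  | .inl (i, _), .inl (j, _) => i ≠ j
  | .inl (i, x), .inr (j, S) => i = j ∧ x ∈ S.1
  | .inr (j, S), .inl (i, x) => i = j ∧ x ∈ S.1
  | .inr _, .inr _ => False

def padGraph (k₀ t : ℕ) : SimpleGraph (PadV k₀ t) where
  Adj := padAdj k₀ t
  symm := by
    constructor
    rintro (⟨i,x⟩|⟨i,S⟩) (⟨j,y⟩|⟨j,S⟩) h
    · exact Ne.symm h
    · exact ⟨h.1, h.2⟩
    · exact ⟨h.1, h.2⟩
    · exact h
  loopless := by
    constructor
    rintro (⟨i,x⟩|⟨i,S⟩) h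
    · exact h rfl
    · exact h

@[simp] lemma padAdj_inl_inl {k₀ t : ℕ} {i j : Fin k₀} {x y : Fin (2*t)} :
    (padGraph k₀ t).Adj (.inl (i,x)) (.inl (j,y)) ↔ i ≠ j := Iff.rfl
@[simp] lemma padAdj_inl_inr {k₀ t : ℕ} {i j : Fin k₀} {x : Fin (2*t)} {S} :
    (padGraph k₀ t).Adj (.inl (i,x)) (.inr (j,S)) ↔ i = j ∧ x ∈ S.1 := Iff.rfl
@[simp] lemma padAdj_inr_inl {k₀ t : ℕ} {i j : Fin k₀} {x : Fin (2*t)} {S} :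
    (padGraph k₀ t).Adj (.inr (j,S)) (.inl (i,x)) ↔ i = j ∧ x ∈ S.1 := Iff.rfl
@[simp] lemma padAdj_inr_inr {k₀ t : ℕ} {i j : Fin k₀} {S T} :
    (padGraph k₀ t).Adj (.inr (i,S)) (.inr (j,T)) ↔ False := Iff.rfl

lemma nbr_inr {k₀ t : ℕ} (i : Fin k₀) (S : {S : Finset (Fin (2*t)) // t ≤ S.card}) :
    (padGraph k₀ t).neighborFinset (.inr (i,S)) = S.1.image (fun x => Sum.inl (i,x)) := by
  ext v
  rcases v with ⟨j,y⟩ | ⟨j,T⟩ <;>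
    simp only [SimpleGraph.mem_neighborFinset, padAdj_inr_inl, padAdj_inr_inr,
      Finset.mem_image, Sum.inl.injEq, Prod.mk.injEq, false_iff] <;> aesop

lemma deg_inr {k₀ t : ℕ} (i : Fin k₀) (S : {S : Finset (Fin (2*t)) // t ≤ S.card}) :
    (padGraph k₀ t).degree (.inr (i,S)) = S.1.card := by
  rw [SimpleGraph.degree, nbr_inr, Finset.card_image_of_injective]
  intro a b h; simpa using h

lemma deg_inl_lower {k₀ t : ℕ} (hk : 2 ≤ k₀) (i : Fin k₀) (x : Fin (2*t)) :
    2*t ≤ (padGraph k₀ t).degree (.inl (i,x)) := by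
  classical
  set j : Fin k₀ := if i = ⟨0, by omega⟩ then ⟨1, by omega⟩ else ⟨0, by omega⟩ with hj
  have hji : j ≠ i := by
    rw [hj]; split_ifs with h
    · rw [h]; intro hc; exact absurd (Fin.val_eq_val _ _ |>.2 hc) (by simp)
    · exact fun hc => h hc.symm
  have hsub : (univ.image fun y : Fin (2*t) => (Sum.inl (j,y) : PadV k₀ t)) ⊆
      (padGraph k₀ t).neighborFinset (.inl (i,x)) := by
    intro v hv
    simp only [Finset.mem_image, Finset.mem_univ, true_and] at hv
    obtain ⟨y, rfl⟩ := hv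
    simp [SimpleGraph.mem_neighborFinset]
    exact fun h => hji h.symm
  calc 2*t = (univ.image fun y : Fin (2*t) => (Sum.inl (j,y) : PadV k₀ t)).card := by
        rw [Finset.card_image_of_injective, Finset.card_univ, Fintype.card_fin]
        intro a b h; simpa using h
    _ ≤ _ := Finset.card_le_card hsub

lemma card_filter_mem {m : ℕ} (hm : 1 ≤ m) (x : Fin m) :
    ((univ : Finset (Finset (Fin m))).filter fun T => x ∈ T).card = 2^(m-1) := by
  classical
  have h : ((univ : Finset (Finset (Fin m))).filter fun T => x ∈ T).card
      = ((univ.erase x : Finset (Fin m)).powerset).card := by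
    apply Finset.card_nbij' (fun T => T.erase x) (fun T => insert x T)
    · intro T hT
      simp only [Finset.mem_coe, Finset.mem_powerset]
      intro y hy
      rw [Finset.mem_erase] at hy
      rw [Finset.mem_erase]
      exact ⟨hy.1, Finset.mem_univ _⟩
    · intro T hT
      simp only [Finset.mem_coe, Finset.mem_filter, Finset.mem_univ, true_and]
      exact Finset.mem_insert_self x T
    · intro T hT
      simp only [Finset.mem_coe, Finset.mem_filter] at hT
      exact Finset.insert_erase hT.2
    · intro T hT
      rw [Finset.mem_coe, Finset.mem_powerset] at hT
      apply Finset.erase_insert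
      intro hc
      have := hT hc
      rw [Finset.mem_erase] at this
      exact this.1 rfl
  rw [h, Finset.card_powerset, Finset.card_erase_of_mem (Finset.mem_univ x),
    Finset.card_univ, Fintype.card_fin]

lemma deg_inl_upper {k₀ t : ℕ} (ht : 1 ≤ t) (i : Fin k₀) (x : Fin (2*t)) :
    (padGraph k₀ t).degree (.inl (i,x)) ≤ k₀*(2*t) + 2^(2*t-1) := by
  classical
  have hsub : (padGraph k₀ t).neighborFinset (.inl (i,x)) ⊆
      ((univ : Finset (Fin k₀ × Fin (2*t))).image (Sum.inl : _ → PadV k₀ t)) ∪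
      (((univ : Finset {S : Finset (Fin (2*t)) // t ≤ S.card}).filter
          fun S => x ∈ S.1).image fun S => Sum.inr (i, S)) := by
    intro v hv
    rw [SimpleGraph.mem_neighborFinset] at hv
    rcases v with ⟨j,y⟩ | ⟨j,S⟩
    · exact Finset.mem_union_left _ (by simp)
    · apply Finset.mem_union_right
      obtain ⟨rfl, hx⟩ := hv
      simp only [Finset.mem_image, Finset.mem_filter, Finset.mem_univ, true_and]
      exact ⟨S, hx, rfl⟩
  have h1 : ((univ : Finset (Fin k₀ × Fin (2*t))).image (Sum.inl : _ → PadV k₀ t)).card ≤ k₀*(2*t) := by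
    calc _ ≤ (univ : Finset (Fin k₀ × Fin (2*t))).card := Finset.card_image_le
      _ = k₀*(2*t) := by simp
  have h2 : (((univ : Finset {S : Finset (Fin (2*t)) // t ≤ S.card}).filter
      fun S => x ∈ S.1).image fun S => Sum.inr (i, S) :
      Finset (PadV k₀ t)).card ≤ 2^(2*t-1) := by
    calc _ ≤ ((univ : Finset {S : Finset (Fin (2*t)) // t ≤ S.card}).filter
          fun S => x ∈ S.1).card := Finset.card_image_le
      _ ≤ ((univ : Finset (Finset (Fin (2*t)))).filter fun T => x ∈ T).card := by
          apply Finset.card_le_card_of_injOn (fun S => S.1)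
          · intro S hS
            simp only [Finset.mem_coe, Finset.mem_filter, Finset.mem_univ, true_and] at hS ⊢
            exact hS
          · intro a _ b _ h; exact Subtype.ext h
      _ = 2^(2*t-1) := card_filter_mem (by omega) x
  calc (padGraph k₀ t).degree (.inl (i,x)) ≤ _ := Finset.card_le_card hsub
    _ ≤ _ := Finset.card_union_le _ _
    _ ≤ k₀*(2*t) + 2^(2*t-1) := Nat.add_le_add h1 h2


lemma succ_ne {k₀ : ℕ} (hk : 2 ≤ k₀) (a : Fin k₀) :
    (⟨(a.1+1) % k₀, Nat.mod_lt _ (by omega)⟩ : Fin k₀) ≠ a := by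
  have ha := a.isLt
  simp only [ne_eq, Fin.ext_iff]
  rcases Nat.lt_or_ge (a.1+1) k₀ with hlt | hge
  · rw [Nat.mod_eq_of_lt hlt]; omega
  · have h0 : (a.1+1) % k₀ = 0 := by
      have : a.1 + 1 = k₀ := by omega
      simp [this]
    rw [h0]; omega

lemma pad_colorable {k₀ t : ℕ} (hk : 2 ≤ k₀) : (padGraph k₀ t).Colorable k₀ := by
  refine ⟨SimpleGraph.Coloring.mk
    (fun v => match v with
      | .inl (i, _) => i
      | .inr (j, _) => ⟨(j.1+1) % k₀, Nat.mod_lt _ (by omega)⟩) ?_⟩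
  rintro (⟨i,x⟩|⟨i,S⟩) (⟨j,y⟩|⟨j,S⟩) h
  · exact h
  · obtain ⟨rfl, -⟩ := h
    exact (succ_ne hk _).symm
  · obtain ⟨rfl, -⟩ := h
    exact succ_ne hk _
  · exact absurd h not_false

lemma pad_chrom {k₀ t : ℕ} (hk : 2 ≤ k₀) (ht : 1 ≤ t) : chrom (padGraph k₀ t) = k₀ := by
  have hmem : k₀ ∈ {n | (padGraph k₀ t).Colorable n} := pad_colorable hk
  have hlow : ∀ b ∈ {n | (padGraph k₀ t).Colorable n}, k₀ ≤ b := by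
    intro b hb
    obtain ⟨C⟩ := hb
    have hinj : Function.Injective
        (fun i : Fin k₀ => C (.inl (i, ⟨0, by omega⟩))) := by
      intro i j h
      by_contra hne
      exact C.valid (by exact hne : (padGraph k₀ t).Adj (.inl (i,⟨0, by omega⟩)) (.inl (j,⟨0, by omega⟩))) h
    simpa using Fintype.card_le_of_injective _ hinj
  exact le_antisymm (Nat.sInf_le hmem) (hlow _ (Nat.sInf_mem ⟨k₀, hmem⟩))


lemma pad_forcing {k₀ t : ℕ} (hk : 2 ≤ k₀) (ht : 2 ≤ t) {k : ℕ}
    (σ : PadV k₀ t → Fin k) (hσ : IsOddColoring (padGraph k₀ t) σ) :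
    k₀ * (t+1) ≤ k := by
  classical
  set Img : Fin k₀ → Finset (Fin k) :=
    fun i => (univ : Finset (Fin (2*t))).image (fun x => σ (.inl (i,x))) with hImg
  have stepA : ∀ i, t+1 ≤ (Img i).card := by
    intro i
    by_contra hcon
    push_neg at hcon
    have hcard : (Img i).card ≤ t := by omega
    set cls : Fin (2*t) → Finset (Fin (2*t)) :=
      fun x => univ.filter (fun y => σ (.inl (i,y)) = σ (.inl (i,x))) with hcls
    have hmemcls : ∀ x, x ∈ cls x := fun x => by simp [hcls]
    set P : Fin (2*t) → Prop :=
      fun x => Odd (cls x).card ∧ ∀ y ∈ cls x, x ≤ y with hP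
    set D := univ.filter P with hD
    set S := univ.filter (fun x => ¬ P x) with hS
    have hDcard : D.card ≤ t := by
      have hle : D.card ≤ (Img i).card := by
        apply Finset.card_le_card_of_injOn (fun x => σ (.inl (i,x)))
        · intro x _
          exact Finset.mem_image_of_mem _ (mem_univ x)
        · intro a ha b hb hab
          simp only [Set.mem_setOf_eq] at hab
          have hcab : cls a = cls b := by
            ext y; simp only [hcls, Finset.mem_filter, Finset.mem_univ, true_and, hab]
          rw [hD, Finset.coe_filter, Set.mem_setOf_eq] at ha hb
          have h1 : a ≤ b := ha.2.2 b (by rw [hcab]; exact hmemcls b)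
          have h2 : b ≤ a := hb.2.2 a (by rw [← hcab]; exact hmemcls a)
          exact le_antisymm h1 h2
      omega
    have hsum := Finset.card_filter_add_card_filter_not
      (s := (univ : Finset (Fin (2*t)))) (p := P)
    have hScard : t ≤ S.card := by
      rw [Finset.card_univ, Fintype.card_fin, ← hD, ← hS] at hsum
      omega
    have heven : ∀ c : Fin k,
        ¬ Odd ((S.filter fun x => σ (.inl (i,x)) = c).card) := by
      intro c
      set T := univ.filter (fun y : Fin (2*t) => σ (.inl (i,y)) = c) with hT
      have hclsT : ∀ x : Fin (2*t), σ (.inl (i,x)) = c → cls x = T := by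
        intro x hx
        ext y; simp only [hcls, hT, Finset.mem_filter, Finset.mem_univ, true_and, hx]
      by_cases hodd : Odd T.card
      · have hTne : T.Nonempty := by
          rw [← Finset.card_pos]
          rcases hodd with ⟨mm, hmm⟩; omega
        set x₀ := T.min' hTne with hx₀
        have hfeq : (S.filter fun x => σ (.inl (i,x)) = c) = T.erase x₀ := by
          ext x
          simp only [hS, Finset.mem_filter, Finset.mem_univ, true_and,
            Finset.mem_erase]
          constructor
          · rintro ⟨hnp, hxc⟩
            have hxT : x ∈ T := by rw [hT]; simp [hxc]
            refine ⟨?_, hxT⟩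
            intro hx0
            apply hnp
            constructor
            · rw [hclsT x hxc]; exact hodd
            · intro y hy
              rw [hclsT x hxc] at hy
              rw [hx0, hx₀]
              exact T.min'_le y hy
          · rintro ⟨hxx0, hxT⟩
            have hxc : σ (.inl (i,x)) = c := (Finset.mem_filter.1 hxT).2
            refine ⟨?_, hxc⟩
            rintro ⟨-, hmin⟩
            apply hxx0
            have h1 : x ≤ x₀ := by
              apply hmin
              rw [hclsT x hxc]
              exact T.min'_mem hTne
            have h2 : x₀ ≤ x := T.min'_le x hxT
            exact le_antisymm h1 h2
        rw [hfeq, Finset.card_erase_of_mem (T.min'_mem hTne)]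
        rcases hodd with ⟨mm, hmm⟩
        rw [hmm]
        simp [Nat.odd_iff]
      · have hfeq : (S.filter fun x => σ (.inl (i,x)) = c) = T := by
          ext x
          simp only [hS, Finset.mem_filter, Finset.mem_univ, true_and, hT]
          constructor
          · rintro ⟨-, hxc⟩; exact hxc
          · intro hxc
            refine ⟨?_, hxc⟩
            rintro ⟨ho, -⟩
            rw [hclsT x hxc] at ho
            exact hodd ho
        rw [hfeq]
        exact hodd
    set Sv : {X : Finset (Fin (2*t)) // t ≤ X.card} := ⟨S, hScard⟩ with hSv
    have hnbr := nbr_inr (k₀ := k₀) i Sv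
    have hne : ((padGraph k₀ t).neighborFinset (.inr (i, Sv))).Nonempty := by
      rw [hnbr]
      apply Finset.Nonempty.image
      rw [← Finset.card_pos]
      omega
    obtain ⟨c, hc⟩ := hσ.2 _ hne
    rw [oddColorsOn, Finset.mem_filter] at hc
    apply heven c
    have hinj : Function.Injective (fun x : Fin (2*t) => (Sum.inl (i,x) : PadV k₀ t)) := by
      intro a b hab; simpa using hab
    rw [hnbr, Finset.filter_image, Finset.card_image_of_injective _ hinj] at hc
    exact hc.2
  have stepB : ∀ i j : Fin k₀, i ≠ j → Disjoint (Img i) (Img j) := by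
    intro i j hij
    rw [Finset.disjoint_left]
    intro c hci hcj
    simp only [hImg, Finset.mem_image, Finset.mem_univ, true_and] at hci hcj
    obtain ⟨x, hx⟩ := hci
    obtain ⟨y, hy⟩ := hcj
    exact hσ.1 (.inl (i,x)) (.inl (j,y)) hij (hx.trans hy.symm)
  calc k₀ * (t+1) = ∑ _i : Fin k₀, (t+1) := by
        rw [Finset.sum_const, Finset.card_univ, Fintype.card_fin, smul_eq_mul]
    _ ≤ ∑ i : Fin k₀, (Img i).card := Finset.sum_le_sum (fun i _ => stepA i)
    _ = (univ.biUnion Img).card :=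
        (Finset.card_biUnion (fun i _ j _ h => stepB i j h)).symm
    _ ≤ (univ : Finset (Fin k)).card := Finset.card_le_card (Finset.subset_univ _)
    _ = k := by rw [Finset.card_univ, Fintype.card_fin]


lemma exists_odd_coloring {W : Type*} [Fintype W] (G : SimpleGraph W) [DecidableRel G.Adj] :
    ∃ σ : W → Fin (Fintype.card W), IsOddColoring G σ := by
  classical
  refine ⟨Fintype.equivFin W, ?_, ?_⟩
  · intro u v huv hc
    exact G.ne_of_adj huv ((Fintype.equivFin W).injective hc)
  · rintro v ⟨u, hu⟩
    refine ⟨Fintype.equivFin W u, ?_⟩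
    rw [oddColorsOn, Finset.mem_filter]
    refine ⟨Finset.mem_univ _, ?_⟩
    have hfe : ((G.neighborFinset v).filter
        fun w => (Fintype.equivFin W) w = (Fintype.equivFin W) u) = {u} := by
      ext w
      simp only [Finset.mem_filter, Finset.mem_singleton]
      constructor
      · rintro ⟨-, hw⟩
        exact (Fintype.equivFin W).injective hw
      · rintro rfl
        exact ⟨hu, rfl⟩
    rw [hfe, Finset.card_singleton]
    exact odd_one

lemma two_mul_le_two_pow : ∀ t : ℕ, 1 ≤ t → 2*t ≤ 2^t
  | 0, h => by omega
  | 1, _ => by norm_num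
  | (t+2), _ => by
      have ih := two_mul_le_two_pow (t+1) (by omega)
      have h2 : (2:ℕ) ≤ 2^(t+1) := by
        calc (2:ℕ) = 2^1 := by norm_num
          _ ≤ 2^(t+1) := Nat.pow_le_pow_right (by norm_num) (by omega)
      have h3 : (2:ℕ)^(t+2) = 2^(t+1) * 2 := pow_succ 2 (t+1)
      omega

theorem stmt14 (k₀ : ℕ) (hk₀ : 2 ≤ k₀) (N : ℝ) :
    ∃ (n : ℕ) (_ : 0 < n) (G : SimpleGraph (Fin n)),
      chrom G = k₀ ∧
      N ≤ (G.maxDegree : ℝ) ∧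
      Real.log G.maxDegree / Real.log 4 ≤ (G.minDegree : ℝ) ∧
      (chrom G : ℝ) * (Real.log G.maxDegree / Real.log 4) < (oddChromNum G : ℝ) := by
  classical
  set t : ℕ := max (⌈N⌉₊) (2^k₀) + 2 with htdef
  have ht2 : 2 ≤ t := by omega
  have htk : k₀ ≤ t := by
    have h1 := Nat.lt_two_pow_self (n := k₀)
    have h2 : 2^k₀ ≤ t := by omega
    omega
  have htN : N ≤ ((2*t : ℕ) : ℝ) := by
    calc N ≤ (⌈N⌉₊ : ℝ) := Nat.le_ceil N
      _ ≤ ((2*t : ℕ) : ℝ) := by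
          have : (⌈N⌉₊ : ℕ) ≤ 2*t := by omega
          exact_mod_cast this
  haveI hVne : Nonempty (PadV k₀ t) := ⟨.inl (⟨0, by omega⟩, ⟨0, by omega⟩)⟩
  set n := Fintype.card (PadV k₀ t) with hndef
  have hn : 0 < n := Fintype.card_pos
  set e : PadV k₀ t ≃ Fin n := Fintype.equivFin (PadV k₀ t) with hedef
  set G' : SimpleGraph (Fin n) :=
    { Adj := fun a b => (padGraph k₀ t).Adj (e.symm a) (e.symm b)
      symm := ⟨fun a b h => (padGraph k₀ t).adj_symm h⟩
      loopless := ⟨fun a h => (padGraph k₀ t).irrefl h⟩ } with hG'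
  have hGadj : ∀ a b, G'.Adj a b ↔ (padGraph k₀ t).Adj (e.symm a) (e.symm b) :=
    fun _ _ => Iff.rfl
  have hnb : ∀ a, G'.neighborFinset a =
      ((padGraph k₀ t).neighborFinset (e.symm a)).image e := by
    intro a
    ext b
    rw [SimpleGraph.mem_neighborFinset, hGadj]
    simp only [Finset.mem_image, SimpleGraph.mem_neighborFinset]
    constructor
    · intro h
      exact ⟨e.symm b, h, by simp⟩
    · rintro ⟨w, hw, rfl⟩
      simpa using hw
  have hdeg : ∀ a, G'.degree a = (padGraph k₀ t).degree (e.symm a) := by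
    intro a
    rw [SimpleGraph.degree, SimpleGraph.degree, hnb,
      Finset.card_image_of_injective _ e.injective]
  -- max degree bounds
  have key : k₀*(2*t) + 2^(2*t-1) ≤ 2^(2*t) := by
    have a1 : 2*t ≤ 2^t := two_mul_le_two_pow t (by omega)
    have a2 : (2*t)*(2*t) ≤ 2^t * 2^t := Nat.mul_le_mul a1 a1
    have a3 : (2:ℕ)^t * 2^t = 2^(2*t) := by rw [← pow_add]; ring_nf
    have a4 : (2:ℕ)^(2*t) = 2 * 2^(2*t-1) := by
      have h2t : 2*t - 1 + 1 = 2*t := by omega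
      calc (2:ℕ)^(2*t) = 2^(2*t-1+1) := by rw [h2t]
        _ = 2^(2*t-1)*2 := pow_succ 2 _
        _ = 2 * 2^(2*t-1) := by ring
    have a5 : k₀*(2*t) ≤ t*(2*t) := Nat.mul_le_mul_right _ htk
    have a6 : 2*(t*(2*t)) = (2*t)*(2*t) := by ring
    have a7 : 2*(t*(2*t)) ≤ 2 * 2^(2*t-1) := by
      rw [a6]
      calc (2*t)*(2*t) ≤ 2^t * 2^t := a2
        _ = 2^(2*t) := a3
        _ = 2 * 2^(2*t-1) := a4
    have a8 : t*(2*t) ≤ 2^(2*t-1) := Nat.le_of_mul_le_mul_left a7 (by norm_num)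
    calc k₀*(2*t) + 2^(2*t-1) ≤ 2^(2*t-1) + 2^(2*t-1) := by
          have := a5.trans a8; omega
      _ = 2 * 2^(2*t-1) := by ring
      _ = 2^(2*t) := a4.symm
  have hup : G'.maxDegree ≤ 2^(2*t) := by
    apply SimpleGraph.maxDegree_le_of_forall_degree_le
    intro a
    rw [hdeg]
    rcases h : e.symm a with ⟨i,x⟩ | ⟨i,S⟩
    · exact (deg_inl_upper (by omega) i x).trans key
    · rw [deg_inr]
      calc S.1.card ≤ Fintype.card (Fin (2*t)) := Finset.card_le_univ _
        _ = 2*t := Fintype.card_fin _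
        _ ≤ 2^(2*t) := (two_mul_le_two_pow t (by omega)).trans
            (Nat.pow_le_pow_right (by norm_num) (by omega))
  have hlow : 2*t ≤ G'.maxDegree := by
    have h1 : 2*t ≤ G'.degree (e (.inl (⟨0, by omega⟩, ⟨0, by omega⟩))) := by
      rw [hdeg, Equiv.symm_apply_apply]
      exact deg_inl_lower hk₀ _ _
    exact h1.trans (SimpleGraph.degree_le_maxDegree _ _)
  have hmin : t ≤ G'.minDegree := by
    haveI : Nonempty (Fin n) := ⟨⟨0, hn⟩⟩
    apply SimpleGraph.le_minDegree_of_forall_le_degree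
    intro a
    rw [hdeg]
    rcases h : e.symm a with ⟨i,x⟩ | ⟨i,S⟩
    · calc t ≤ 2*t := by omega
        _ ≤ _ := deg_inl_lower hk₀ i x
    · rw [deg_inr]; exact S.2
  -- chromatic number
  have hchromset : {b : ℕ | G'.Colorable b} = {b : ℕ | (padGraph k₀ t).Colorable b} := by
    ext b
    constructor
    · rintro ⟨C⟩
      refine ⟨SimpleGraph.Coloring.mk (fun v => C (e v)) ?_⟩
      intro u v huv
      apply C.valid
      rw [hGadj, Equiv.symm_apply_apply, Equiv.symm_apply_apply]
      exact huv
    · rintro ⟨C⟩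
      refine ⟨SimpleGraph.Coloring.mk (fun a => C (e.symm a)) ?_⟩
      intro a b hab
      exact C.valid ((hGadj a b).1 hab)
  have hchrom : chrom G' = k₀ := by
    rw [chrom, hchromset, ← chrom]
    exact pad_chrom hk₀ (by omega)
  -- odd chromatic number
  have hodd : k₀ * (t+1) ≤ oddChromNum G' := by
    have hSodne : Fintype.card (Fin n) ∈ {k | ∃ σ : Fin n → Fin k, IsOddColoring G' σ} :=
      exists_odd_coloring G'
    have hbound : ∀ k ∈ {k | ∃ σ : Fin n → Fin k, IsOddColoring G' σ}, k₀*(t+1) ≤ k := by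
      rintro k ⟨τ, hτp, hτo⟩
      apply pad_forcing hk₀ ht2 (fun v => τ (e v))
      constructor
      · intro u v huv
        apply hτp
        rw [hGadj, Equiv.symm_apply_apply, Equiv.symm_apply_apply]
        exact huv
      · intro v hvne
        have hnb' : G'.neighborFinset (e v) =
            ((padGraph k₀ t).neighborFinset v).image e := by
          rw [hnb, Equiv.symm_apply_apply]
        have hne' : (G'.neighborFinset (e v)).Nonempty := by
          rw [hnb']
          exact hvne.image e
        obtain ⟨c, hc⟩ := hτo (e v) hne'
        refine ⟨c, ?_⟩
        rw [oddColorsOn, Finset.mem_filter] at hc ⊢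
        refine ⟨Finset.mem_univ _, ?_⟩
        have hcnt : ((G'.neighborFinset (e v)).filter fun w => τ w = c).card
            = (((padGraph k₀ t).neighborFinset v).filter fun u => τ (e u) = c).card := by
          rw [hnb', Finset.filter_image, Finset.card_image_of_injective _ e.injective]
        rw [← hcnt]
        exact hc.2
    exact hbound _ (Nat.sInf_mem ⟨_, hSodne⟩)
  -- real-number facts
  have hlog4 : (0:ℝ) < Real.log 4 := Real.log_pos (by norm_num)
  have hΔpos : (0:ℝ) < (G'.maxDegree : ℝ) := by
    have : 0 < G'.maxDegree := by omega
    exact_mod_cast this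
  have hlogle : Real.log (G'.maxDegree) / Real.log 4 ≤ (t : ℝ) := by
    rw [div_le_iff₀ hlog4]
    have hΔ4 : (G'.maxDegree : ℝ) ≤ (4:ℝ)^t := by
      calc (G'.maxDegree : ℝ) ≤ ((2^(2*t) : ℕ) : ℝ) := by exact_mod_cast hup
        _ = (4:ℝ)^t := by
            push_cast
            rw [pow_mul]
            norm_num
    calc Real.log (G'.maxDegree) ≤ Real.log ((4:ℝ)^t) :=
          Real.log_le_log hΔpos hΔ4
      _ = (t:ℝ) * Real.log 4 := by rw [Real.log_pow]
  refine ⟨n, hn, G', hchrom, ?_, ?_, ?_⟩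
  · calc N ≤ ((2*t : ℕ) : ℝ) := htN
      _ ≤ (G'.maxDegree : ℝ) := by exact_mod_cast hlow
  · calc Real.log (G'.maxDegree) / Real.log 4 ≤ (t:ℝ) := hlogle
      _ ≤ (G'.minDegree : ℝ) := by exact_mod_cast hmin
  · rw [hchrom]
    have h1 : (k₀:ℝ) * (Real.log (G'.maxDegree) / Real.log 4) ≤ (k₀:ℝ) * (t:ℝ) :=
      mul_le_mul_of_nonneg_left hlogle (by positivity)
    have h2 : (k₀:ℝ) * (t:ℝ) < ((k₀*(t+1) : ℕ) : ℝ) := by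
      push_cast
      have hk0 : (0:ℝ) < (k₀:ℝ) := by exact_mod_cast (by omega : 0 < k₀)
      nlinarith
    have h3 : ((k₀*(t+1) : ℕ) : ℝ) ≤ (oddChromNum G' : ℝ) := by exact_mod_cast hodd
    linarith
end

section
/- For every even integer Δ ≥ 2 and every integer t with 1 ≤ t ≤ Δ, setting h := Δ + 1 − t, there exists a finite simple Δ-regular graph G whose h-odd chromatic number satisfies χ_o^h(G) > (1/2)·Δ²/(t + 1). -/
open Finset

attribute [local instance] Classical.propDecidable

namespace Stmt19Aux

def coords (m : ℕ) (v : Fin (m * m)) : Fin m × Fin m := finProdFinEquiv.symm v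

def rook (m : ℕ) : SimpleGraph (Fin (m * m)) where
  Adj a b := a ≠ b ∧ ((coords m a).1 = (coords m b).1 ∨ (coords m a).2 = (coords m b).2)
  symm := by
    constructor
    rintro a b ⟨h1, h2⟩
    exact ⟨h1.symm, h2.imp Eq.symm Eq.symm⟩
  loopless := by constructor; rintro a ⟨h1, -⟩; exact h1 rfl

lemma rook_adj {m : ℕ} {a b : Fin (m * m)} :
    (rook m).Adj a b ↔ a ≠ b ∧
      ((coords m a).1 = (coords m b).1 ∨ (coords m a).2 = (coords m b).2) := Iff.rfl

lemma coords_inj {m : ℕ} : Function.Injective (coords m) := finProdFinEquiv.symm.injective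

lemma card_row {m : ℕ} (a : Fin m) :
    (univ.filter fun w : Fin (m * m) => (coords m w).1 = a).card = m := by
  rw [← Finset.card_map (finProdFinEquiv (m := m) (n := m)).symm.toEmbedding]
  have h : (univ.filter fun w : Fin (m * m) => (coords m w).1 = a).map
      (finProdFinEquiv (m := m) (n := m)).symm.toEmbedding = {a} ×ˢ univ := by
    ext p
    simp only [Finset.mem_map, Finset.mem_filter, Finset.mem_univ, true_and,
      Equiv.coe_toEmbedding, Finset.mem_product, Finset.mem_singleton, and_true]
    constructor
    · rintro ⟨v, hv, rfl⟩; exact hv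
    · intro hp; exact ⟨finProdFinEquiv p, by simpa [coords] using hp, by simp [coords]⟩
  rw [h, Finset.card_product, Finset.card_singleton, Finset.card_univ, Fintype.card_fin, one_mul]

lemma card_col {m : ℕ} (b : Fin m) :
    (univ.filter fun w : Fin (m * m) => (coords m w).2 = b).card = m := by
  rw [← Finset.card_map (finProdFinEquiv (m := m) (n := m)).symm.toEmbedding]
  have h : (univ.filter fun w : Fin (m * m) => (coords m w).2 = b).map
      (finProdFinEquiv (m := m) (n := m)).symm.toEmbedding = univ ×ˢ {b} := by
    ext p
    simp only [Finset.mem_map, Finset.mem_filter, Finset.mem_univ, true_and,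
      Equiv.coe_toEmbedding, Finset.mem_product, Finset.mem_singleton, true_and]
    constructor
    · rintro ⟨v, hv, rfl⟩; exact hv
    · intro hp; exact ⟨finProdFinEquiv p, by simpa [coords] using hp, by simp [coords]⟩
  rw [h, Finset.card_product, Finset.card_singleton, Finset.card_univ, Fintype.card_fin, mul_one]

lemma rook_neighborFinset {m : ℕ} (v : Fin (m * m)) :
    (rook m).neighborFinset v =
      ((univ.filter fun w : Fin (m * m) =>
        (coords m w).1 = (coords m v).1 ∨ (coords m w).2 = (coords m v).2).erase v) := by
  ext w
  simp only [SimpleGraph.mem_neighborFinset, rook_adj, Finset.mem_erase, Finset.mem_filter,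
    Finset.mem_univ, true_and]
  constructor
  · rintro ⟨h1, h2⟩; exact ⟨fun h => h1 h.symm, h2.imp Eq.symm Eq.symm⟩
  · rintro ⟨h1, h2⟩; exact ⟨fun h => h1 h.symm, h2.imp Eq.symm Eq.symm⟩

lemma rook_degree {m : ℕ} (hm : 1 ≤ m) (v : Fin (m * m)) :
    (rook m).degree v = 2 * m - 2 := by
  classical
  rw [← SimpleGraph.card_neighborFinset_eq_degree, rook_neighborFinset]
  have hsplit : (univ.filter fun w : Fin (m * m) =>
      (coords m w).1 = (coords m v).1 ∨ (coords m w).2 = (coords m v).2)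
      = (univ.filter fun w => (coords m w).1 = (coords m v).1)
        ∪ (univ.filter fun w => (coords m w).2 = (coords m v).2) :=
    Finset.filter_or _ _ _
  have hrow : (univ.filter fun w : Fin (m * m) => (coords m w).1 = (coords m v).1).card = m := by
    exact card_row _
  have hcol : (univ.filter fun w : Fin (m * m) => (coords m w).2 = (coords m v).2).card = m := by
    exact card_col _
  have hinter : (univ.filter fun w : Fin (m * m) => (coords m w).1 = (coords m v).1)
      ∩ (univ.filter fun w => (coords m w).2 = (coords m v).2) = {v} := by
    ext w
    simp only [Finset.mem_inter, Finset.mem_filter, Finset.mem_univ, true_and,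
      Finset.mem_singleton]
    constructor
    · rintro ⟨h1, h2⟩
      exact coords_inj (Prod.ext_iff.mpr ⟨h1, h2⟩)
    · rintro rfl; exact ⟨rfl, rfl⟩
  have hmem : v ∈ (univ.filter fun w : Fin (m * m) =>
      (coords m w).1 = (coords m v).1 ∨ (coords m w).2 = (coords m v).2) := by
    simp
  rw [Finset.card_erase_of_mem hmem, hsplit]
  have := Finset.card_union_add_card_inter
    (univ.filter fun w : Fin (m * m) => (coords m w).1 = (coords m v).1)
    (univ.filter fun w => (coords m w).2 = (coords m v).2)
  rw [hinter, hrow, hcol, Finset.card_singleton] at this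
  omega

lemma rook_common {m : ℕ} {u w : Fin (m * m)} (h1 : (coords m u).1 ≠ (coords m w).1)
    (h2 : (coords m u).2 ≠ (coords m w).2) :
    (univ.filter fun v => (rook m).Adj v u ∧ (rook m).Adj v w).card = 2 := by
  set p1 := finProdFinEquiv ((coords m u).1, (coords m w).2) with hp1
  set p2 := finProdFinEquiv ((coords m w).1, (coords m u).2) with hp2
  have c1 : coords m p1 = ((coords m u).1, (coords m w).2) := by simp [coords, hp1]
  have c2 : coords m p2 = ((coords m w).1, (coords m u).2) := by simp [coords, hp2]
  have hset : (univ.filter fun v => (rook m).Adj v u ∧ (rook m).Adj v w) = {p1, p2} := by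
    ext v
    simp only [Finset.mem_filter, Finset.mem_univ, true_and, Finset.mem_insert,
      Finset.mem_singleton, rook_adj]
    constructor
    · rintro ⟨⟨hvu, hu⟩, hvw, hw⟩
      rcases hu with hu | hu <;> rcases hw with hw | hw
      · exact absurd (hu.symm.trans hw) h1
      · left; apply coords_inj; rw [c1]; exact Prod.ext_iff.mpr ⟨hu, hw⟩
      · right; apply coords_inj; rw [c2]; exact Prod.ext_iff.mpr ⟨hw, hu⟩
      · exact absurd (hu.symm.trans hw) h2
    · rintro (rfl | rfl)
      · refine ⟨⟨?_, Or.inl (by rw [c1])⟩, ?_, Or.inr (by rw [c1])⟩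
        · intro hEq; apply h2; rw [hEq] at c1; rw [c1]
        · intro hEq; apply h1; rw [hEq] at c1; rw [c1]
      · refine ⟨⟨?_, Or.inr (by rw [c2])⟩, ?_, Or.inl (by rw [c2])⟩
        · intro hEq; apply h1; rw [hEq] at c2; rw [c2]
        · intro hEq; apply h2; rw [hEq] at c2; rw [c2]
  rw [hset, Finset.card_pair]
  intro h
  apply h1
  rw [h] at c1
  rw [c1] at c2
  exact (Prod.ext_iff.mp c2).1


lemma mul_pred_eq (x : ℕ) : x * (x - 1) = x * x - x := by
  cases x with
  | zero => rfl
  | succ n => simp [Nat.succ_sub_one, Nat.mul_succ]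

lemma pointwise_aux (q : ℕ) (hq : q ≤ 2) :
    q * (q - 1) + (if Odd q then 1 else 0) = q := by
  interval_cases q <;> decide

lemma sq_split (x : ℕ) : x ^ 2 = x * (x - 1) + x := by
  cases x with
  | zero => rfl
  | succ n => rw [Nat.succ_sub_one]; ring

lemma rook_colors {m t k : ℕ} (hm : 2 ≤ m) (ht1 : 1 ≤ t) (ht2 : t ≤ 2 * m - 2)
    (σ : Fin (m * m) → Fin k)
    (hσ : IsHOddColoring (2 * m - 2 + 1 - t) (rook m) σ) :
    2 * ((m : ℝ) * m) ≤ (k : ℝ) * ((t : ℝ) + 1) := by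
  obtain ⟨hprop, hodd⟩ := hσ
  set N : Fin (m * m) → Finset (Fin (m * m)) := fun v => (rook m).neighborFinset v with hN
  have hdeg : ∀ v, (N v).card = 2 * m - 2 := fun v => rook_degree (by omega) v
  set q : Fin (m * m) → Fin k → ℕ := fun v c => ((N v).filter fun w => σ w = c).card with hqdef
  set r : Fin k → ℕ := fun c => (univ.filter fun w => σ w = c).card with hrdef
  -- sum of fibers is the degree
  have hsum : ∀ v, (∑ c : Fin k, q v c) = 2 * m - 2 := by
    intro v
    rw [← hdeg v]
    exact (Finset.card_eq_sum_card_fiberwise (fun x _ => Finset.mem_univ (σ x))).symm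
  -- each color appears at most twice in a neighbourhood
  have hq2 : ∀ v c, q v c ≤ 2 := by
    intro v c
    have hsub : (N v).filter (fun w => σ w = c) ⊆
        ((N v).filter fun w => σ w = c ∧ (coords m w).1 = (coords m v).1) ∪
        ((N v).filter fun w => σ w = c ∧ (coords m w).2 = (coords m v).2) := by
      intro w hw
      simp only [Finset.mem_filter, Finset.mem_union] at hw ⊢
      obtain ⟨hwN, hwc⟩ := hw
      have hadj : (rook m).Adj v w := (SimpleGraph.mem_neighborFinset _ _ _).mp hwN
      rcases hadj.2 with h | h
      · exact Or.inl ⟨hwN, hwc, h.symm⟩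
      · exact Or.inr ⟨hwN, hwc, h.symm⟩
    have h1 : (((N v).filter fun w => σ w = c ∧ (coords m w).1 = (coords m v).1)).card ≤ 1 := by
      rw [Finset.card_le_one]
      intro x hx y hy
      simp only [Finset.mem_filter] at hx hy
      by_contra hne
      have hadj : (rook m).Adj x y := ⟨hne, Or.inl (hx.2.2.trans hy.2.2.symm)⟩
      exact hprop x y hadj (hx.2.1.trans hy.2.1.symm)
    have h2 : (((N v).filter fun w => σ w = c ∧ (coords m w).2 = (coords m v).2)).card ≤ 1 := by
      rw [Finset.card_le_one]
      intro x hx y hy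
      simp only [Finset.mem_filter] at hx hy
      by_contra hne
      have hadj : (rook m).Adj x y := ⟨hne, Or.inr (hx.2.2.trans hy.2.2.symm)⟩
      exact hprop x y hadj (hx.2.1.trans hy.2.1.symm)
    calc q v c ≤ _ := Finset.card_le_card hsub
      _ ≤ _ := Finset.card_union_le _ _
      _ ≤ 2 := by omega
  -- the odd-colour condition
  have hoddcard : ∀ v, 2 * m - 2 + 1 - t ≤ (univ.filter fun c => Odd (q v c)).card := by
    intro v
    have hne : (N v).Nonempty := Finset.card_pos.mp (by rw [hdeg]; omega)
    have h0 := hodd v hne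
    rw [rook_degree (by omega) v] at h0
    have heq : oddColorsOn (N v) σ = univ.filter fun c => Odd (q v c) := rfl
    rw [heq] at h0
    omega
  -- per-vertex bound on repeats
  have hpervertex : ∀ v, ∑ c : Fin k, q v c * (q v c - 1) ≤ t - 1 := by
    intro v
    have hkey : ∑ c : Fin k, (q v c * (q v c - 1) + if Odd (q v c) then 1 else 0)
        = ∑ c : Fin k, q v c :=
      Finset.sum_congr rfl fun c _ => pointwise_aux _ (hq2 v c)
    rw [Finset.sum_add_distrib] at hkey
    have hfilter : ∑ c : Fin k, (if Odd (q v c) then 1 else 0)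
        = (univ.filter fun c => Odd (q v c)).card := (Finset.card_filter _ _).symm
    have h1 := hoddcard v
    have h2 := hsum v
    omega
  -- double counting: each colour class contributes 2·r(r-1)
  have hglobal : ∀ c : Fin k, ∑ v : Fin (m * m), q v c * (q v c - 1) = 2 * (r c * (r c - 1)) := by
    intro c
    have hoff : ∀ v, q v c * (q v c - 1) = ((N v).filter fun w => σ w = c).offDiag.card := by
      intro v
      rw [Finset.offDiag_card, mul_pred_eq]
    have hoffset : ∀ v, ((N v).filter fun w => σ w = c).offDiag
        = ((univ.filter fun w => σ w = c).offDiag.filter fun p => p.1 ∈ N v ∧ p.2 ∈ N v) := by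
      intro v
      ext p
      simp only [Finset.mem_offDiag, Finset.mem_filter, Finset.mem_univ, true_and]
      tauto
    calc ∑ v : Fin (m * m), q v c * (q v c - 1)
        = ∑ v : Fin (m * m), ((univ.filter fun w => σ w = c).offDiag.filter
            fun p => p.1 ∈ N v ∧ p.2 ∈ N v).card := by
          refine Finset.sum_congr rfl fun v _ => ?_
          rw [hoff v, hoffset v]
      _ = ∑ v : Fin (m * m), ∑ p ∈ (univ.filter fun w => σ w = c).offDiag,
            (if p.1 ∈ N v ∧ p.2 ∈ N v then 1 else 0) := by
          refine Finset.sum_congr rfl fun v _ => ?_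
          exact Finset.card_filter _ _
      _ = ∑ p ∈ (univ.filter fun w => σ w = c).offDiag, ∑ v : Fin (m * m),
            (if p.1 ∈ N v ∧ p.2 ∈ N v then 1 else 0) := Finset.sum_comm
      _ = ∑ p ∈ (univ.filter fun w => σ w = c).offDiag, 2 := by
          refine Finset.sum_congr rfl fun p hp => ?_
          simp only [Finset.mem_offDiag, Finset.mem_filter, Finset.mem_univ, true_and] at hp
          obtain ⟨hc1, hc2, hne⟩ := hp
          have hnadj : ¬ (rook m).Adj p.1 p.2 := by
            intro hadj
            exact hprop _ _ hadj (hc1.trans hc2.symm)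
          rw [rook_adj] at hnadj
          push_neg at hnadj
          have hrc := hnadj hne
          rw [← Finset.card_filter]
          have hpred : ∀ v, (p.1 ∈ N v ∧ p.2 ∈ N v) ↔
              ((rook m).Adj v p.1 ∧ (rook m).Adj v p.2) := by
            intro v
            simp [hN, SimpleGraph.mem_neighborFinset]
          rw [Finset.filter_congr fun v _ => hpred v]
          exact rook_common hrc.1 hrc.2
      _ = 2 * (r c * (r c - 1)) := by
          rw [Finset.sum_const, Finset.offDiag_card, smul_eq_mul, ← mul_pred_eq, mul_comm]
  -- total bound
  have htotal : ∑ c : Fin k, 2 * (r c * (r c - 1)) ≤ (m * m) * (t - 1) := by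
    calc ∑ c : Fin k, 2 * (r c * (r c - 1))
        = ∑ c : Fin k, ∑ v : Fin (m * m), q v c * (q v c - 1) :=
          Finset.sum_congr rfl fun c _ => (hglobal c).symm
      _ = ∑ v : Fin (m * m), ∑ c : Fin k, q v c * (q v c - 1) := Finset.sum_comm
      _ ≤ ∑ _v : Fin (m * m), (t - 1) := Finset.sum_le_sum fun v _ => hpervertex v
      _ = (m * m) * (t - 1) := by
          rw [Finset.sum_const, Finset.card_univ, Fintype.card_fin, smul_eq_mul]
  have hsumr : ∑ c : Fin k, r c = m * m := by
    have h := Finset.card_eq_sum_card_fiberwise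
      (s := (univ : Finset (Fin (m * m)))) (t := (univ : Finset (Fin k))) (f := σ)
      (fun x _ => Finset.mem_univ _)
    rw [Finset.card_univ, Fintype.card_fin] at h
    exact h.symm
  -- squares bound, in ℕ
  have hsq2 : 2 * (∑ c : Fin k, (r c) ^ 2) ≤ (m * m) * (t + 1) := by
    have e1 : ∑ c : Fin k, (r c) ^ 2 = (∑ c : Fin k, r c * (r c - 1)) + ∑ c : Fin k, r c := by
      rw [← Finset.sum_add_distrib]
      exact Finset.sum_congr rfl fun c _ => sq_split (r c)
    have e2 : ∑ c : Fin k, 2 * (r c * (r c - 1)) = 2 * ∑ c : Fin k, r c * (r c - 1) :=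
      (Finset.mul_sum _ _ _).symm
    calc 2 * (∑ c : Fin k, (r c) ^ 2)
        = 2 * (∑ c : Fin k, r c * (r c - 1)) + 2 * (∑ c : Fin k, r c) := by rw [e1]; ring
      _ ≤ (m * m) * (t - 1) + 2 * (m * m) := by
          rw [hsumr]
          have := htotal
          rw [e2] at this
          omega
      _ = (m * m) * (t + 1) := by
          have ht : t - 1 + 2 = t + 1 := by omega
          rw [← ht]; ring
  -- Cauchy–Schwarz in ℝ
  have hcs : ((m * m : ℕ) : ℝ) ^ 2 ≤ (k : ℝ) * ∑ c : Fin k, ((r c : ℝ)) ^ 2 := by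
    have h := Finset.sum_mul_sq_le_sq_mul_sq univ (fun _ : Fin k => (1 : ℝ))
      (fun c => (r c : ℝ))
    simp only [one_mul, one_pow] at h
    have h1 : (∑ _c : Fin k, (1 : ℝ)) = (k : ℝ) := by
      rw [Finset.sum_const, Finset.card_univ, Fintype.card_fin, nsmul_eq_mul, mul_one]
    have h2 : (∑ c : Fin k, (r c : ℝ)) = ((m * m : ℕ) : ℝ) := by
      rw [← Nat.cast_sum, hsumr]
    rw [h1, h2] at h
    exact h
  have hsq2R : 2 * (∑ c : Fin k, ((r c : ℝ)) ^ 2) ≤ ((m : ℝ) * m) * ((t : ℝ) + 1) := by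
    exact_mod_cast hsq2
  have hcs' : ((m : ℝ) * m) ^ 2 ≤ (k : ℝ) * ∑ c : Fin k, ((r c : ℝ)) ^ 2 := by
    push_cast at hcs
    exact hcs
  have hMpos : (0 : ℝ) < (m : ℝ) * m := by
    have hmR : (2 : ℝ) ≤ (m : ℝ) := by exact_mod_cast hm
    nlinarith
  have hk0 : (0 : ℝ) ≤ (k : ℝ) := Nat.cast_nonneg _
  nlinarith [hcs', hsq2R, hMpos, hk0, mul_le_mul_of_nonneg_left hsq2R hk0]

end Stmt19Aux

theorem stmt19 (Δ : ℕ) (hΔeven : Even Δ) (hΔ : 2 ≤ Δ) (t : ℕ) (ht1 : 1 ≤ t) (ht2 : t ≤ Δ) :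
    ∃ (n : ℕ) (G : SimpleGraph (Fin n)),
      (∀ v, G.degree v = Δ) ∧
      (1 / 2 : ℝ) * (Δ : ℝ) ^ 2 / ((t : ℝ) + 1) < (hOddChromNum (Δ + 1 - t) G : ℝ) := by
  obtain ⟨d, hd⟩ := hΔeven
  have hd1 : 1 ≤ d := by omega
  set m := d + 1 with hmdef
  have hm2 : 2 ≤ m := by omega
  refine ⟨m * m, Stmt19Aux.rook m, ?_, ?_⟩
  · intro v
    rw [Stmt19Aux.rook_degree (by omega) v]
    omega
  · set S : Set ℕ :=
      {k | ∃ σ : Fin (m * m) → Fin k, IsHOddColoring (Δ + 1 - t) (Stmt19Aux.rook m) σ} with hS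
    have hchrom : hOddChromNum (Δ + 1 - t) (Stmt19Aux.rook m) = sInf S := rfl
    have hmemb : (m * m) ∈ S := by
      refine ⟨fun v => v, fun u v hadj => hadj.1, ?_⟩
      intro v _
      have hocol : oddColorsOn ((Stmt19Aux.rook m).neighborFinset v) (fun v => v)
          = (Stmt19Aux.rook m).neighborFinset v := by
        ext c
        simp only [oddColorsOn, Finset.mem_filter, Finset.mem_univ, true_and]
        constructor
        · intro hoddc
          by_contra hc
          have : ((Stmt19Aux.rook m).neighborFinset v).filter (fun w => w = c) = ∅ := by
            ext w
            simp only [Finset.mem_filter, Finset.notMem_empty, iff_false]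
            rintro ⟨hw, rfl⟩
            exact hc hw
          rw [this] at hoddc
          simp at hoddc
        · intro hc
          have : ((Stmt19Aux.rook m).neighborFinset v).filter (fun w => w = c) = {c} := by
            ext w
            simp only [Finset.mem_filter, Finset.mem_singleton]
            constructor
            · rintro ⟨-, rfl⟩; rfl
            · rintro rfl; exact ⟨hc, rfl⟩
          rw [this]
          simp
      rw [hocol, SimpleGraph.card_neighborFinset_eq_degree]
      exact min_le_right _ _
    have hne : S.Nonempty := ⟨m * m, hmemb⟩
    have hmem := Nat.sInf_mem hne
    obtain ⟨σ, hσ⟩ := hmem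
    have hht : Δ + 1 - t = 2 * m - 2 + 1 - t := by omega
    rw [hht] at hσ
    have hbound := Stmt19Aux.rook_colors hm2 ht1 (by omega) σ hσ
    rw [hchrom]
    set K := sInf S with hK
    have htpos : (0 : ℝ) < (t : ℝ) + 1 := by positivity
    rw [div_lt_iff₀ htpos]
    have hΔR : (Δ : ℝ) = 2 * (d : ℝ) := by exact_mod_cast (by omega : Δ = 2 * d)
    have hmR : (m : ℝ) = (d : ℝ) + 1 := by exact_mod_cast hmdef
    have hd0 : (0 : ℝ) ≤ (d : ℝ) := Nat.cast_nonneg _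
    rw [hΔR]
    rw [hmR] at hbound
    nlinarith [hbound, hd0]
end
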